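/- arXiv:1906.05316 — 5 statements merged into one kernel-verified Lean document; each statement's English description precedes it below -/
import Mathlib

section
/- Let (π, T) be as above, t = −Te, α ∈ (0,1], and define f(x) = x^{α−1} π E_{α,α}(T x^α) t for x > 0, where E_{α,β}(A) = Σ_{k≥0} A^k / Γ(αk + β) is the matrix Mittag-Leffler function. Then for all sufficiently large u > 0, ∫_0^∞ e^{-ux} f(x) dx = π (u^α I − T)^{-1} t. -/
open MeasureTheory Matrix

/-- The matrix Mittag-Leffler function `E_{α,β}(A) = Σ_{k≥0} A^k / Γ(αk+β)`. -/
noncomputable def matrixML {p : ℕ} (α β : ℝ) (A : Matrix (Fin p) (Fin p) ℝ) :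
    Matrix (Fin p) (Fin p) ℝ :=
  ∑' k : ℕ, (Real.Gamma (α * k + β))⁻¹ • A ^ k

section auxGamma
open Set

lemma gamma_lb {s M : ℝ} (hs : 1 ≤ s) (hM : 0 < M) :
    Real.exp (-(2*M)) * M ^ s ≤ Real.Gamma s := by
  rw [Real.Gamma_eq_integral (by linarith)]
  have hsub : Ioc M (2*M) ⊆ Ioi (0:ℝ) := fun x hx => lt_trans hM hx.1
  have hint : IntegrableOn (fun x : ℝ => Real.exp (-x) * x ^ (s-1)) (Ioi 0) :=
    Real.GammaIntegral_convergent (by linarith)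
  have h1 : Real.exp (-(2*M)) * M^(s-1) * (volume (Ioc M (2*M))).toReal
      ≤ ∫ x in Ioc M (2*M), Real.exp (-x) * x ^ (s-1) := by
    rw [mul_comm, ← smul_eq_mul, ← measureReal_def]
    apply MeasureTheory.setIntegral_ge_of_const_le measurableSet_Ioc
    · rw [Real.volume_Ioc]; exact ENNReal.ofReal_lt_top.ne
    · intro x hx
      have hx0 : 0 < x := lt_trans hM hx.1
      have := Real.rpow_le_rpow hM.le hx.1.le (by linarith : (0:ℝ) ≤ s - 1)
      have := Real.exp_le_exp.2 (neg_le_neg hx.2)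
      nlinarith [Real.rpow_pos_of_pos hM (s-1), Real.exp_pos (-x), Real.rpow_pos_of_pos hx0 (s-1)]
    · exact hint.mono_set hsub
  have h2 : ∫ x in Ioc M (2*M), Real.exp (-x) * x ^ (s-1)
      ≤ ∫ x in Ioi 0, Real.exp (-x) * x ^ (s-1) := by
    apply setIntegral_mono_set hint
    · filter_upwards [self_mem_ae_restrict measurableSet_Ioi] with x hx
      exact mul_nonneg (Real.exp_pos _).le (Real.rpow_nonneg (le_of_lt hx) _)
    · exact Filter.Eventually.of_forall hsub
  refine le_trans (le_of_eq ?_) (h1.trans h2)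
  rw [Real.volume_Ioc, ENNReal.toReal_ofReal (by linarith)]
  have : 2*M - M = M := by ring
  rw [this, mul_assoc, ← Real.rpow_add_one hM.ne']
  ring_nf

lemma summable_pow_div_gamma (r α β : ℝ) (hα : 0 < α) (hβ : 0 < β) (hr : 0 ≤ r) :
    Summable (fun k : ℕ => r ^ k / Real.Gamma (α * k + β)) := by
  set M : ℝ := (2*r+2) ^ (1/α) with hMdef
  have hM : 0 < M := Real.rpow_pos_of_pos (by linarith) _
  have hMα : M ^ α = 2*r+2 := by
    rw [hMdef, ← Real.rpow_mul (by linarith), one_div, inv_mul_cancel₀ hα.ne', Real.rpow_one]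
  obtain ⟨N, hN⟩ := exists_nat_ge ((1 - β)/α)
  have key : ∀ k : ℕ, N ≤ k → r ^ k / Real.Gamma (α * k + β)
      ≤ (Real.exp (2*M) / M ^ β) * (1/2) ^ k := by
    intro k hk
    have hs : 1 ≤ α * k + β := by
      have : (N:ℝ) ≤ k := Nat.cast_le.2 hk
      have := mul_le_mul_of_nonneg_left (hN.trans this) hα.le
      rw [mul_div_cancel₀ _ hα.ne'] at this
      linarith
    have hΓ := gamma_lb hs hM
    have hΓpos : 0 < Real.Gamma (α * k + β) := Real.Gamma_pos_of_pos (by positivity)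
    have hMs : M ^ (α * k + β) = (M ^ α) ^ k * M ^ β := by
      rw [Real.rpow_add hM, ← Real.rpow_natCast (M ^ α) k, ← Real.rpow_mul hM.le]
    have hbound : M ^ (α*k+β) * Real.exp (-(2*M)) ≤ Real.Gamma (α * k + β) := by
      linarith [hΓ]
    rw [div_le_iff₀ hΓpos]
    have hMβ : (0:ℝ) < M ^ β := Real.rpow_pos_of_pos hM β
    calc r ^ k ≤ ((2*r+2)/2) ^ k := by
          apply pow_le_pow_left₀ hr; linarith
      _ = (M^α)^k * (1/2)^k := by
          rw [hMα, div_pow, one_div, inv_pow, div_eq_mul_inv]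
      _ = (Real.exp (2*M) / M ^ β * (1/2)^k) * ((M^α)^k * M^β * Real.exp (-(2*M))) := by
          rw [Real.exp_neg]
          field_simp
      _ = (Real.exp (2*M) / M ^ β * (1/2)^k) * (M^(α*k+β) * Real.exp (-(2*M))) := by
          rw [hMs]
      _ ≤ _ := by
          apply mul_le_mul_of_nonneg_left hbound
          positivity
  have hC : (0:ℝ) < Real.exp (2*M) / M ^ β := by positivity
  have hsum : Summable (fun k : ℕ => (Real.exp (2*M) / M ^ β) * (1/2) ^ k) :=
    (summable_geometric_of_lt_one (by norm_num) (by norm_num)).mul_left _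
  rw [← summable_nat_add_iff N]
  apply Summable.of_nonneg_of_le (fun n => ?_) (fun n => ?_) hsum
  · have : 0 < Real.Gamma (α * (n+N) + β) := Real.Gamma_pos_of_pos (by positivity)
    positivity
  · refine (key (n+N) (by omega)).trans ?_
    apply mul_le_mul_of_nonneg_left _ hC.le
    apply pow_le_pow_of_le_one (by norm_num) (by norm_num)
    omega

end auxGamma

section auxMatrix
open Filter
attribute [local instance] Matrix.linftyOpNormedAddCommGroup Matrix.linftyOpNormedRing
  Matrix.linftyOpNormedAlgebra Matrix.linftyOpNormedSpace

variable {p : ℕ}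

lemma norm_map_ofReal (A : Matrix (Fin p) (Fin p) ℝ) :
    ‖A.map (Complex.ofReal ·)‖ = ‖A‖ := by
  simp [Matrix.linfty_opNorm_def]

lemma pow_norm_bound (A : Matrix (Fin p) (Fin p) ℝ) (r : ℝ) (hr : 0 < r)
    (h : ∀ z ∈ spectrum ℂ (A.map (Complex.ofReal ·)), ‖z‖ < r) :
    ∃ C q : ℝ, 0 < C ∧ 0 ≤ q ∧ q < r ∧ ∀ k : ℕ, ‖A ^ k‖ ≤ C * q ^ k := by
  set B : Matrix (Fin p) (Fin p) ℂ := A.map (Complex.ofReal ·) with hB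
  have hnorm : ∀ k : ℕ, ‖A ^ k‖ = ‖B ^ k‖ := by
    intro k
    have : (A ^ k).map (Complex.ofReal ·) = B ^ k := by
      rw [hB]; exact map_pow (Complex.ofRealHom.mapMatrix) A k
    rw [← this, norm_map_ofReal]
  have hρ : spectralRadius ℂ B < ENNReal.ofReal r := by
    have hfin := B.finite_spectrum
    rcases (spectrum ℂ B).eq_empty_or_nonempty with he | hne
    · rw [spectralRadius, he]
      simp [hr]
    · have hne' : hfin.toFinset.Nonempty := by
        rwa [Set.Finite.toFinset_nonempty]
      obtain ⟨z₀, hz₀mem, hz₀⟩ := hfin.toFinset.exists_max_image (fun z => (‖z‖₊ : NNReal)) hne'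
      rw [spectralRadius]
      have hle : (⨆ z ∈ spectrum ℂ B, (‖z‖₊ : ENNReal)) ≤ (‖z₀‖₊ : ENNReal) := by
        refine iSup₂_le fun z hz => ?_
        exact_mod_cast hz₀ z (hfin.mem_toFinset.2 hz)
      refine lt_of_le_of_lt hle ?_
      have : ‖z₀‖ < r := h z₀ (hfin.mem_toFinset.1 hz₀mem)
      rw [← ENNReal.ofReal_coe_nnreal, ENNReal.ofReal_lt_ofReal_iff hr]
      simpa [coe_nnnorm] using this
  obtain ⟨q, hq0, hq1, hq2⟩ := ENNReal.lt_iff_exists_real_btwn.1 hρ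
  have hqr : q < r := by
    rwa [ENNReal.ofReal_lt_ofReal_iff hr] at hq2
  have hqpos : 0 < q := by
    rcases lt_or_eq_of_le hq0 with h' | h'
    · exact h'
    · exfalso; rw [← h'] at hq1; simp at hq1
  have hgel := spectrum.pow_norm_pow_one_div_tendsto_nhds_spectralRadius B
  have hev : ∀ᶠ n : ℕ in atTop, ENNReal.ofReal (‖B ^ n‖ ^ (1 / (n:ℝ))) < ENNReal.ofReal q :=
    hgel.eventually_lt_const hq1
  rw [eventually_atTop] at hev
  obtain ⟨N, hN⟩ := hev
  have hpow : ∀ n : ℕ, max N 1 ≤ n → ‖B ^ n‖ ≤ q ^ n := by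
    intro n hn
    have hn1 : 1 ≤ n := le_trans (le_max_right _ _) hn
    have h1 := hN n (le_trans (le_max_left _ _) hn)
    rw [ENNReal.ofReal_lt_ofReal_iff hqpos] at h1
    have h2 : (‖B ^ n‖ ^ (1/(n:ℝ))) ^ (n:ℝ) ≤ q ^ (n:ℝ) :=
      Real.rpow_le_rpow (Real.rpow_nonneg (norm_nonneg _) _) h1.le (by positivity)
    have hnne : ((n:ℝ)) ≠ 0 := by exact_mod_cast (Nat.pos_of_ne_zero (by omega)).ne'
    rwa [← Real.rpow_mul (norm_nonneg _), one_div, inv_mul_cancel₀ hnne, Real.rpow_one,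
      Real.rpow_natCast] at h2
  set M := max N 1 with hMdef
  set C : ℝ := 1 + ∑ n ∈ Finset.range M, ‖A ^ n‖ / q ^ n with hC
  have hCpos : 0 < C := by
    have : 0 ≤ ∑ n ∈ Finset.range M, ‖A ^ n‖ / q ^ n :=
      Finset.sum_nonneg fun n _ => by positivity
    rw [hC]; linarith
  refine ⟨C, q, hCpos, hqpos.le, hqr, fun k => ?_⟩
  have hqk : (0:ℝ) < q ^ k := pow_pos hqpos k
  rcases lt_or_ge k M with hk | hk
  · have hmem : k ∈ Finset.range M := Finset.mem_range.2 hk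
    have h1 : ‖A ^ k‖ / q ^ k ≤ ∑ n ∈ Finset.range M, ‖A ^ n‖ / q ^ n :=
      Finset.single_le_sum (f := fun n => ‖A ^ n‖ / q ^ n) (fun n _ => by positivity) hmem
    have h2 : ‖A ^ k‖ / q ^ k ≤ C := by rw [hC]; linarith
    calc ‖A ^ k‖ = ‖A ^ k‖ / q ^ k * q ^ k := by field_simp
      _ ≤ C * q ^ k := mul_le_mul_of_nonneg_right h2 hqk.le
  · have := hpow k hk
    rw [← hnorm k] at this
    have h1C : 1 ≤ C := by
      have : 0 ≤ ∑ n ∈ Finset.range M, ‖A ^ n‖ / q ^ n :=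
        Finset.sum_nonneg fun n _ => by positivity
      rw [hC]; linarith
    calc ‖A ^ k‖ ≤ q ^ k := this
      _ ≤ C * q ^ k := by nlinarith [hqk]

lemma dot_tsum (π t : Fin p → ℝ) (f : ℕ → Matrix (Fin p) (Fin p) ℝ) (h : Summable f) :
    π ⬝ᵥ ((∑' k, f k) *ᵥ t) = ∑' k, π ⬝ᵥ (f k *ᵥ t) := by
  let L : Matrix (Fin p) (Fin p) ℝ →ₗ[ℝ] ℝ :=
    { toFun := fun M => π ⬝ᵥ (M *ᵥ t),
      map_add' := by intro M N; simp [Matrix.add_mulVec, dotProduct_add],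
      map_smul' := by intro c M; simp [Matrix.smul_mulVec, dotProduct_smul] }
  exact (L.toContinuousLinearMap.map_tsum h : _)

lemma dot_bound (π t : Fin p → ℝ) (M : Matrix (Fin p) (Fin p) ℝ) :
    |π ⬝ᵥ (M *ᵥ t)| ≤ (∑ i, |π i|) * ‖t‖ * ‖M‖ := by
  calc |π ⬝ᵥ (M *ᵥ t)| ≤ ∑ i, |π i * (M *ᵥ t) i| := Finset.abs_sum_le_sum_abs _ _
    _ ≤ ∑ i : Fin p, |π i| * (‖M‖ * ‖t‖) := by
        apply Finset.sum_le_sum; intro i _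
        rw [abs_mul]
        apply mul_le_mul_of_nonneg_left _ (abs_nonneg _)
        calc |(M *ᵥ t) i| ≤ ‖M *ᵥ t‖ := by
              rw [← Real.norm_eq_abs]; exact norm_le_pi_norm (M *ᵥ t) i
          _ ≤ ‖M‖ * ‖t‖ := Matrix.linfty_opNorm_mulVec M t
    _ = (∑ i, |π i|) * ‖t‖ * ‖M‖ := by rw [← Finset.sum_mul]; ring

lemma geom_inverse (S : Matrix (Fin p) (Fin p) ℝ) (h : Summable (fun k : ℕ => S ^ k))
    (h0 : Tendsto (fun n : ℕ => S ^ n) atTop (nhds 0)) :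
    (1 - S) * ∑' k : ℕ, S ^ k = 1 := by
  have hs := h.hasSum.tendsto_sum_nat
  have h1 : Tendsto (fun n : ℕ => (1 - S) * ∑ i ∈ Finset.range n, S ^ i)
      atTop (nhds ((1 - S) * ∑' k : ℕ, S ^ k)) := hs.const_mul (1 - S)
  have h2 : ∀ n : ℕ, (1 - S) * ∑ i ∈ Finset.range n, S ^ i = 1 - S ^ n := by
    intro n
    calc (1 - S) * ∑ i ∈ Finset.range n, S ^ i
        = -((S - 1) * ∑ i ∈ Finset.range n, S ^ i) := by rw [← neg_mul, neg_sub]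
      _ = -(S ^ n - 1) := by rw [mul_geom_sum]
      _ = 1 - S ^ n := by rw [neg_sub]
  simp_rw [h2] at h1
  have h3 : Tendsto (fun n : ℕ => (1 : Matrix (Fin p) (Fin p) ℝ) - S ^ n) atTop (nhds 1) := by
    have := tendsto_const_nhds (x := (1 : Matrix (Fin p) (Fin p) ℝ)) (f := atTop (α := ℕ))
    simpa using this.sub h0
  exact tendsto_nhds_unique h1 h3

end auxMatrix

section main
open Filter
attribute [local instance] Matrix.linftyOpNormedAddCommGroup Matrix.linftyOpNormedRing
  Matrix.linftyOpNormedAlgebra Matrix.linftyOpNormedSpace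

/-- For a phase-type generator `(π, T)` with exit vector `t = -Te` and
`α ∈ (0,1]`, the density `f(x) = x^(α-1) π E_{α,α}(T x^α) t` has Laplace transform
`π (u^α I - T)⁻¹ t` for all sufficiently large `u` (namely `u^α` beyond the spectral
radius of `-T`). -/
theorem mml_density_laplace {p : ℕ} (hp : 0 < p) (α : ℝ) (hα : α ∈ Set.Ioc (0 : ℝ) 1)
    (T : Matrix (Fin p) (Fin p) ℝ)
    (hoff : ∀ i j, i ≠ j → 0 ≤ T i j) (hdiag : ∀ i, T i i < 0)
    (hrow : ∀ i, ∑ j, T i j ≤ 0) (hinv : IsUnit T.det)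
    (π : Fin p → ℝ) (hπ : ∀ i, 0 ≤ π i) (hπ1 : ∑ i, π i = 1) :
    let t : Fin p → ℝ := -(T *ᵥ fun _ => 1)
    ∀ u : ℝ, 0 < u →
      (∀ z ∈ spectrum ℂ ((-T).map (Complex.ofReal ·)), ‖z‖ < u ^ α) →
      ∫ x in Set.Ioi (0 : ℝ),
          Real.exp (-u * x) * (x ^ (α - 1) * (π ⬝ᵥ (matrixML α α (x ^ α • T) *ᵥ t)))
        = π ⬝ᵥ ((u ^ α • (1 : Matrix (Fin p) (Fin p) ℝ) - T)⁻¹ *ᵥ t) := by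
  intro t u hu hspec
  obtain ⟨hα0, hα1⟩ := hα
  set v : ℝ := u ^ α with hvdef
  have hv : 0 < v := Real.rpow_pos_of_pos hu α
  -- transfer spectrum hypothesis from -T to T
  have hspec' : ∀ z ∈ spectrum ℂ (T.map (Complex.ofReal ·)), ‖z‖ < v := by
    intro z hz
    have hmapneg : (-T).map (Complex.ofReal ·) = -(T.map (Complex.ofReal ·)) := by
      ext i j; simp [Matrix.map_apply]
    have hmem : -z ∈ spectrum ℂ ((-T).map (Complex.ofReal ·)) := by
      rw [hmapneg, ← spectrum.neg_eq]
      exact Set.neg_mem_neg.2 hz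
    have := hspec (-z) hmem
    simpa using this
  obtain ⟨C, q, hC, hq0, hqv, hpow⟩ := pow_norm_bound T v hv hspec'
  set K : ℝ := (∑ i, |π i|) * ‖t‖ with hK
  have hK0 : 0 ≤ K := by
    rw [hK]
    apply mul_nonneg _ (norm_nonneg _)
    exact Finset.sum_nonneg fun i _ => abs_nonneg _
  set c : ℕ → ℝ := fun k => π ⬝ᵥ (T ^ k *ᵥ t) with hc
  have hcb : ∀ k, |c k| ≤ K * C * q ^ k := by
    intro k
    calc |c k| ≤ K * ‖T ^ k‖ := dot_bound π t (T ^ k)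
      _ ≤ K * (C * q ^ k) := mul_le_mul_of_nonneg_left (hpow k) hK0
      _ = K * C * q ^ k := by ring
  have hΓ : ∀ k : ℕ, 0 < Real.Gamma (α * k + α) := fun k =>
    Real.Gamma_pos_of_pos (by positivity)
  set f : ℕ → ℝ → ℝ := fun k x =>
    Real.exp (-u * x) * x ^ (α * k + α - 1) * ((Real.Gamma (α * k + α))⁻¹ * c k) with hf
  -- pointwise identity on Ioi 0
  have hPW : ∀ x ∈ Set.Ioi (0:ℝ),
      Real.exp (-u * x) * (x ^ (α - 1) * (π ⬝ᵥ (matrixML α α (x ^ α • T) *ᵥ t)))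
        = ∑' k : ℕ, f k x := by
    intro x hx
    have hx0 : (0:ℝ) < x := hx
    have hxα : 0 < x ^ α := Real.rpow_pos_of_pos hx0 α
    have hsummlx : Summable (fun k : ℕ => (Real.Gamma (α * k + α))⁻¹ • ((x ^ α • T) ^ k)) := by
      apply Summable.of_norm
      apply Summable.of_nonneg_of_le (fun k => norm_nonneg _) (fun k => ?_)
        ((summable_pow_div_gamma (x ^ α * q) α α hα0 hα0 (by positivity)).mul_left C)
      rw [smul_pow, norm_smul, norm_smul, Real.norm_eq_abs, Real.norm_eq_abs,
        abs_of_nonneg (inv_nonneg.2 (hΓ k).le), abs_of_nonneg (by positivity : (0:ℝ) ≤ (x^α)^k)]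
      have h2 : (x^α)^k * ‖T^k‖ ≤ (x^α)^k * (C*q^k) :=
        mul_le_mul_of_nonneg_left (hpow k) (by positivity)
      calc (Real.Gamma (α * k + α))⁻¹ * ((x^α)^k * ‖T^k‖)
          ≤ (Real.Gamma (α * k + α))⁻¹ * ((x^α)^k * (C*q^k)) :=
            mul_le_mul_of_nonneg_left h2 (by positivity)
        _ = C * ((x^α*q)^k / Real.Gamma (α * k + α)) := by
            rw [mul_pow]; field_simp
    have hml : π ⬝ᵥ (matrixML α α (x ^ α • T) *ᵥ t)
        = ∑' k : ℕ, (Real.Gamma (α * k + α))⁻¹ * ((x^α)^k * c k) := by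
      rw [show matrixML α α (x ^ α • T)
          = ∑' k : ℕ, (Real.Gamma (α * k + α))⁻¹ • ((x ^ α • T) ^ k) from rfl,
        dot_tsum π t _ hsummlx]
      refine tsum_congr fun k => ?_
      rw [smul_pow, hc]
      simp [Matrix.smul_mulVec, dotProduct_smul, smul_eq_mul]
    rw [hml, ← tsum_mul_left, ← tsum_mul_left]
    refine tsum_congr fun k => ?_
    simp only [hf]
    have hxk : (x ^ α) ^ k = x ^ (α * k) := by
      rw [← Real.rpow_natCast (x ^ α) k, ← Real.rpow_mul hx0.le]
    have hxs : x ^ (α * k + α - 1) = x ^ (α * k) * x ^ (α - 1) := by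
      rw [← Real.rpow_add hx0]; ring_nf
    rw [hxs, ← hxk]; ring
  -- basic integrability
  have hbase : ∀ s : ℝ, 0 < s →
      IntegrableOn (fun x : ℝ => x ^ (s - 1) * Real.exp (-(u * x))) (Set.Ioi 0) := by
    intro s hs
    have h1 : IntegrableOn (fun x : ℝ => x ^ (s-1) * Real.exp (-u * x ^ (1:ℝ)))
        (Set.Ioi 0) := integrableOn_rpow_mul_exp_neg_mul_rpow (by linarith) one_pos hu
    apply h1.congr_fun ?_ measurableSet_Ioi
    intro x hx
    simp only [Real.rpow_one, neg_mul]
  have heq : ∀ k : ℕ, f k = fun x =>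
      ((Real.Gamma (α * k + α))⁻¹ * c k) * (x ^ (α * k + α - 1) * Real.exp (-(u * x))) := by
    intro k; funext x; simp only [hf, neg_mul]; ring
  have hfint : ∀ k : ℕ, Integrable (f k) (volume.restrict (Set.Ioi 0)) := by
    intro k
    rw [heq k]
    exact ((hbase (α * k + α) (by positivity)).const_mul _)
  -- value of each integral
  have h1u : ∀ k : ℕ, (1/u) ^ (α * (k:ℝ) + α) = v⁻¹ ^ (k+1) := by
    intro k
    rw [one_div, Real.inv_rpow hu.le, inv_pow]
    congr 1
    rw [hvdef, ← Real.rpow_natCast (u ^ α) (k+1), ← Real.rpow_mul hu.le]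
    congr 1
    push_cast; ring
  have hval : ∀ k : ℕ, ∫ x in Set.Ioi (0:ℝ), f k x = c k * v⁻¹ ^ (k+1) := by
    intro k
    rw [heq k, MeasureTheory.integral_const_mul,
      Real.integral_rpow_mul_exp_neg_mul_Ioi (by positivity : 0 < α * (k:ℝ) + α) hu,
      h1u k]
    field_simp
  have hnormval : ∀ k : ℕ, ∫ x in Set.Ioi (0:ℝ), ‖f k x‖ = |c k| * v⁻¹ ^ (k+1) := by
    intro k
    have hcong : ∀ x ∈ Set.Ioi (0:ℝ), ‖f k x‖
        = |(Real.Gamma (α * k + α))⁻¹ * c k| * (x ^ (α * k + α - 1) * Real.exp (-(u * x))) := by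
      intro x hx
      have hx0 : (0:ℝ) < x := hx
      rw [heq k, Real.norm_eq_abs, abs_mul, abs_of_nonneg (by positivity :
        (0:ℝ) ≤ x ^ (α * k + α - 1) * Real.exp (-(u * x)))]
    rw [MeasureTheory.setIntegral_congr_fun measurableSet_Ioi hcong,
      MeasureTheory.integral_const_mul,
      Real.integral_rpow_mul_exp_neg_mul_Ioi (by positivity : 0 < α * (k:ℝ) + α) hu,
      h1u k, abs_mul, abs_of_nonneg (inv_nonneg.2 (hΓ k).le)]
    field_simp
  -- summability of norms of integrals
  have hqvlt : q * v⁻¹ < 1 := by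
    rw [← div_eq_mul_inv, div_lt_one hv]; exact hqv
  have hqvnn : 0 ≤ q * v⁻¹ := by positivity
  have hsumnorm : Summable (fun k : ℕ => ∫ x in Set.Ioi (0:ℝ), ‖f k x‖) := by
    have hgeo : Summable (fun k : ℕ => (K * C * v⁻¹) * (q * v⁻¹) ^ k) :=
      (summable_geometric_of_lt_one hqvnn hqvlt).mul_left _
    have h1 : Summable (fun k : ℕ => |c k| * v⁻¹ ^ (k+1)) := by
      apply Summable.of_nonneg_of_le (fun k => by positivity) (fun k => ?_) hgeo
      calc |c k| * v⁻¹ ^ (k+1) ≤ (K * C * q ^ k) * v⁻¹ ^ (k+1) :=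
            mul_le_mul_of_nonneg_right (hcb k) (by positivity)
        _ = (K * C * v⁻¹) * (q * v⁻¹) ^ k := by
            rw [pow_succ, mul_pow]; ring
    exact h1.congr fun k => (hnormval k).symm
  -- swap integral and sum
  have hswap := MeasureTheory.integral_tsum_of_summable_integral_norm hfint hsumnorm
  -- summability of the matrix geometric series
  set S : Matrix (Fin p) (Fin p) ℝ := v⁻¹ • T with hS
  have hSpow : ∀ k : ℕ, S ^ k = v⁻¹ ^ k • T ^ k := fun k => by rw [hS, smul_pow]
  have hSnorm : ∀ k : ℕ, ‖S ^ k‖ ≤ C * (q * v⁻¹) ^ k := by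
    intro k
    rw [hSpow k, norm_smul, Real.norm_eq_abs, abs_of_nonneg (by positivity : (0:ℝ) ≤ v⁻¹ ^ k)]
    calc v⁻¹ ^ k * ‖T ^ k‖ ≤ v⁻¹ ^ k * (C * q ^ k) :=
          mul_le_mul_of_nonneg_left (hpow k) (by positivity)
      _ = C * (q * v⁻¹) ^ k := by rw [mul_pow]; ring
  have hgeoC : Summable (fun k : ℕ => C * (q * v⁻¹) ^ k) :=
    (summable_geometric_of_lt_one hqvnn hqvlt).mul_left _
  have hSsum : Summable (fun k : ℕ => S ^ k) :=
    Summable.of_norm (Summable.of_nonneg_of_le (fun k => norm_nonneg _) hSnorm hgeoC)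
  have hS0 : Tendsto (fun n : ℕ => S ^ n) atTop (nhds 0) := by
    apply squeeze_zero_norm hSnorm
    have := (tendsto_pow_atTop_nhds_zero_of_lt_one hqvnn hqvlt).const_mul C
    simpa using this
  have hgeom := geom_inverse S hSsum hS0
  -- identify the inverse
  have hMsum : Summable (fun k : ℕ => v⁻¹ ^ (k+1) • T ^ k) := by
    apply Summable.of_norm
    apply Summable.of_nonneg_of_le (fun k => norm_nonneg _) (fun k => ?_)
      ((summable_geometric_of_lt_one hqvnn hqvlt).mul_left (C * v⁻¹))
    rw [norm_smul, Real.norm_eq_abs, abs_of_nonneg (by positivity : (0:ℝ) ≤ v⁻¹ ^ (k+1))]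
    calc v⁻¹ ^ (k+1) * ‖T ^ k‖ ≤ v⁻¹ ^ (k+1) * (C * q ^ k) :=
          mul_le_mul_of_nonneg_left (hpow k) (by positivity)
      _ = (C * v⁻¹) * (q * v⁻¹) ^ k := by rw [pow_succ, mul_pow]; ring
  have hMeq : (∑' k : ℕ, v⁻¹ ^ (k+1) • T ^ k) = v⁻¹ • ∑' k : ℕ, S ^ k := by
    rw [← Summable.tsum_const_smul v⁻¹ hSsum]
    refine tsum_congr fun k => ?_
    rw [hSpow k, smul_smul, pow_succ]
    ring_nf
  have hfact : (v • (1 : Matrix (Fin p) (Fin p) ℝ) - T) * (v⁻¹ • ∑' k : ℕ, S ^ k) = 1 := by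
    have h1 : v • ((1 : Matrix (Fin p) (Fin p) ℝ) - S) = v • 1 - T := by
      rw [smul_sub, hS, smul_smul, mul_inv_cancel₀ hv.ne', one_smul]
    rw [← h1, smul_mul_smul_comm, mul_inv_cancel₀ hv.ne', one_smul]
    exact hgeom
  have hinv_eq : (v • (1 : Matrix (Fin p) (Fin p) ℝ) - T)⁻¹ = v⁻¹ • ∑' k : ℕ, S ^ k :=
    Matrix.inv_eq_right_inv hfact
  -- final computation
  calc ∫ x in Set.Ioi (0:ℝ),
        Real.exp (-u * x) * (x ^ (α - 1) * (π ⬝ᵥ (matrixML α α (x ^ α • T) *ᵥ t)))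
      = ∫ x in Set.Ioi (0:ℝ), ∑' k : ℕ, f k x :=
        MeasureTheory.setIntegral_congr_fun measurableSet_Ioi hPW
    _ = ∑' k : ℕ, ∫ x in Set.Ioi (0:ℝ), f k x := hswap.symm
    _ = ∑' k : ℕ, c k * v⁻¹ ^ (k+1) := tsum_congr hval
    _ = π ⬝ᵥ ((∑' k : ℕ, v⁻¹ ^ (k+1) • T ^ k) *ᵥ t) := by
        rw [dot_tsum π t _ hMsum]
        refine tsum_congr fun k => ?_
        rw [hc]
        simp [Matrix.smul_mulVec, dotProduct_smul, smul_eq_mul]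
        ring
    _ = π ⬝ᵥ ((v • (1 : Matrix (Fin p) (Fin p) ℝ) - T)⁻¹ *ᵥ t) := by
        rw [hinv_eq, hMeq]
end main
end

section
/- Let (π, T) be a phase-type generator with exit vector t = −Te and α ∈ (0,1]. Define F(x) = 1 − π E_{α,1}(T x^α) e for x ≥ 0. Then F(0) = 0 and F′(x) = x^{α−1} π E_{α,α}(T x^α) t for x > 0; i.e. F is the cumulative distribution function of the MML(α, π, T) distribution. -/
open MeasureTheory Matrix

/-- Gautschi-type lower bound from log-convexity of Γ. -/
lemma gamma_ratio {α : ℝ} (hα0 : 0 < α) (hα1 : α ≤ 1) {x : ℝ} (hx1 : 1 ≤ x) :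
    x ^ α * Real.Gamma x ≤ 2 * Real.Gamma (x + α) := by
  have hx0 : 0 < x := lt_of_lt_of_le one_pos hx1
  have hxα : 0 < x + α := by linarith
  have hΓx : 0 < Real.Gamma x := Real.Gamma_pos_of_pos hx0
  have hΓxα : 0 < Real.Gamma (x + α) := Real.Gamma_pos_of_pos hxα
  have hconv := Real.convexOn_log_Gamma.2 (Set.mem_Ioi.mpr hxα)
    (Set.mem_Ioi.mpr (by linarith : (0:ℝ) < x + α + 1)) hα0.le
    (by linarith : (0:ℝ) ≤ 1 - α) (by ring)
  have hcomb : α • (x+α) + (1-α) • (x+α+1) = x + 1 := by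
    simp only [smul_eq_mul]; ring
  rw [hcomb] at hconv
  simp only [Function.comp, smul_eq_mul] at hconv
  have hΓ1 : Real.Gamma (x+1) = x * Real.Gamma x := Real.Gamma_add_one hx0.ne'
  have hΓ2 : Real.Gamma (x+α+1) = (x+α) * Real.Gamma (x+α) := Real.Gamma_add_one hxα.ne'
  rw [hΓ1, hΓ2, Real.log_mul hx0.ne' hΓx.ne', Real.log_mul hxα.ne' hΓxα.ne'] at hconv
  have hlog : Real.log x + Real.log (Real.Gamma x)
      ≤ Real.log (Real.Gamma (x+α)) + (1-α) * Real.log (x+α) := by linarith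
  have hineq : x * Real.Gamma x ≤ Real.Gamma (x+α) * (x+α) ^ (1-α) := by
    have h := Real.exp_le_exp.mpr hlog
    rw [Real.exp_add, Real.exp_add, Real.exp_log hx0, Real.exp_log hΓx,
      Real.exp_log hΓxα, mul_comm (1-α) (Real.log (x+α)), ← Real.rpow_def_of_pos hxα] at h
    exact h
  have hfinal : (x+α) ^ (1-α) ≤ 2 * x ^ (1-α) := by
    calc (x+α) ^ (1-α) ≤ (2*x) ^ (1-α) :=
          Real.rpow_le_rpow hxα.le (by linarith) (by linarith)
    _ = 2 ^ (1-α) * x ^ (1-α) := Real.mul_rpow (by norm_num) hx0.le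
    _ ≤ 2 * x ^ (1-α) := by
        refine mul_le_mul_of_nonneg_right ?_ (Real.rpow_nonneg hx0.le _)
        calc (2:ℝ) ^ (1-α) ≤ 2 ^ (1:ℝ) :=
              Real.rpow_le_rpow_of_exponent_le one_le_two (by linarith)
        _ = 2 := Real.rpow_one 2
  have h3 : x * Real.Gamma x ≤ Real.Gamma (x+α) * (2 * x ^ (1-α)) :=
    le_trans hineq (mul_le_mul_of_nonneg_left hfinal hΓxα.le)
  have hx_split : x ^ α * x ^ (1-α) = x := by
    rw [← Real.rpow_add hx0]; norm_num
  have hxp : 0 < x ^ (1-α) := Real.rpow_pos_of_pos hx0 _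
  have h4 : (x ^ α * Real.Gamma x) * x ^ (1-α) ≤ (2 * Real.Gamma (x+α)) * x ^ (1-α) := by
    calc (x ^ α * Real.Gamma x) * x ^ (1-α) = (x ^ α * x ^ (1-α)) * Real.Gamma x := by ring
    _ = x * Real.Gamma x := by rw [hx_split]
    _ ≤ Real.Gamma (x+α) * (2 * x ^ (1-α)) := h3
    _ = (2 * Real.Gamma (x+α)) * x ^ (1-α) := by ring
  exact le_of_mul_le_mul_right h4 hxp

lemma summable_gamma_inv {α : ℝ} (hα0 : 0 < α) (hα1 : α ≤ 1) (β r : ℝ)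
    (hβ : 0 ≤ β) (hr : 0 ≤ r) :
    Summable (fun k : ℕ => r ^ k * (Real.Gamma (α * k + β))⁻¹) := by
  apply summable_of_ratio_norm_eventually_le (r := 1/2) (by norm_num)
  have htend : Filter.Tendsto (fun k : ℕ => α * k + β) Filter.atTop Filter.atTop :=
    Filter.tendsto_atTop_add_const_right _ β
      (Filter.Tendsto.const_mul_atTop hα0 tendsto_natCast_atTop_atTop)
  filter_upwards [htend.eventually_ge_atTop (max 1 ((4*r+1) ^ α⁻¹))] with k hk
  have hx1 : 1 ≤ α * k + β := le_trans (le_max_left _ _) hk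
  have hx0 : (0:ℝ) < α * k + β := lt_of_lt_of_le one_pos hx1
  have hxα : (0:ℝ) < α * k + β + α := by linarith
  have hΓx : 0 < Real.Gamma (α * k + β) := Real.Gamma_pos_of_pos hx0
  have hΓxα : 0 < Real.Gamma (α * k + β + α) := Real.Gamma_pos_of_pos hxα
  have hxa : 4 * r + 1 ≤ (α * k + β) ^ α := by
    have h1 : (4*r+1) ^ α⁻¹ ≤ α * k + β := le_trans (le_max_right _ _) hk
    have h2 : ((4*r+1) ^ α⁻¹) ^ α ≤ (α * k + β) ^ α :=
      Real.rpow_le_rpow (Real.rpow_nonneg (by linarith) _) h1 hα0.le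
    rwa [← Real.rpow_mul (by linarith), inv_mul_cancel₀ hα0.ne', Real.rpow_one] at h2
  have hg := gamma_ratio hα0 hα1 hx1
  have hkey : r * Real.Gamma (α * k + β) ≤ 1/2 * Real.Gamma (α * k + β + α) := by
    nlinarith [mul_le_mul_of_nonneg_right hxa hΓx.le]
  have harg : α * ((k:ℕ)+1 : ℕ) + β = α * k + β + α := by push_cast; ring
  rw [harg, Real.norm_eq_abs, Real.norm_eq_abs, abs_of_nonneg (by positivity),
    abs_of_nonneg (by positivity)]
  have h2 : r * (Real.Gamma (α * k + β + α))⁻¹ ≤ 1/2 * (Real.Gamma (α * k + β))⁻¹ := by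
    have hd : r / Real.Gamma (α * k + β + α) ≤ (1/2) / Real.Gamma (α * k + β) :=
      (div_le_div_iff₀ hΓxα hΓx).mpr (by linarith)
    simpa [div_eq_mul_inv] using hd
  calc r ^ (k+1) * (Real.Gamma (α * k + β + α))⁻¹
      = r ^ k * (r * (Real.Gamma (α * k + β + α))⁻¹) := by rw [pow_succ]; ring
  _ ≤ r ^ k * (1/2 * (Real.Gamma (α * k + β))⁻¹) :=
      mul_le_mul_of_nonneg_left h2 (pow_nonneg hr k)
  _ = 1/2 * (r ^ k * (Real.Gamma (α * k + β))⁻¹) := by ring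

lemma entry_pow_bound {p : ℕ} (A : Matrix (Fin p) (Fin p) ℝ) :
    ∀ (k : ℕ) (i j : Fin p), |(A ^ k) i j| ≤ (∑ i', ∑ j', |A i' j'|) ^ k := by
  have hM0 : (0:ℝ) ≤ ∑ i', ∑ j', |A i' j'| :=
    Finset.sum_nonneg fun _ _ => Finset.sum_nonneg fun _ _ => abs_nonneg _
  have hcol : ∀ j, (∑ l, |A l j|) ≤ ∑ i', ∑ j', |A i' j'| := fun j =>
    Finset.sum_le_sum fun l _ =>
      Finset.single_le_sum (f := fun j' => |A l j'|) (fun _ _ => abs_nonneg _) (Finset.mem_univ j)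
  intro k
  induction k with
  | zero =>
    intro i j
    simp only [pow_zero, Matrix.one_apply]
    split_ifs <;> simp
  | succ k ih =>
    intro i j
    rw [pow_succ, Matrix.mul_apply]
    calc |∑ l, (A^k) i l * A l j| ≤ ∑ l, |(A^k) i l * A l j| := Finset.abs_sum_le_sum_abs _ _
    _ = ∑ l, |(A^k) i l| * |A l j| := by simp [abs_mul]
    _ ≤ ∑ l, (∑ i', ∑ j', |A i' j'|)^k * |A l j| :=
        Finset.sum_le_sum fun l _ => mul_le_mul_of_nonneg_right (ih i l) (abs_nonneg _)
    _ = (∑ i', ∑ j', |A i' j'|)^k * ∑ l, |A l j| := by rw [← Finset.mul_sum]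
    _ ≤ (∑ i', ∑ j', |A i' j'|)^k * (∑ i', ∑ j', |A i' j'|) :=
        mul_le_mul_of_nonneg_left (hcol j) (pow_nonneg hM0 k)
    _ = _ := by rw [← pow_succ]

lemma gamma_inv_nonneg {y : ℝ} (hy : 0 ≤ y) : 0 ≤ (Real.Gamma y)⁻¹ := by
  rcases eq_or_lt_of_le hy with h | h
  · rw [← h, Real.Gamma_zero]; simp
  · exact (inv_nonneg).mpr (Real.Gamma_pos_of_pos h).le

lemma summable_ML_series {p : ℕ} {α : ℝ} (hα0 : 0 < α) (hα1 : α ≤ 1) {β : ℝ} (hβ : 0 ≤ β)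
    (A : Matrix (Fin p) (Fin p) ℝ) :
    Summable (fun k : ℕ => (Real.Gamma (α * k + β))⁻¹ • A ^ k) := by
  have hM0 : (0:ℝ) ≤ ∑ i', ∑ j', |A i' j'| :=
    Finset.sum_nonneg fun _ _ => Finset.sum_nonneg fun _ _ => abs_nonneg _
  apply Pi.summable.mpr; intro i
  apply Pi.summable.mpr; intro j
  apply Summable.of_abs
  refine Summable.of_nonneg_of_le (fun k => abs_nonneg _) (fun k => ?_)
    (summable_gamma_inv hα0 hα1 β _ hβ hM0)
  have hΓnn : 0 ≤ (Real.Gamma (α * k + β))⁻¹ := gamma_inv_nonneg (by positivity)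
  calc |((Real.Gamma (α * k + β))⁻¹ • A ^ k) i j|
      = (Real.Gamma (α * k + β))⁻¹ * |(A ^ k) i j| := by
        simp [Matrix.smul_apply, smul_eq_mul, abs_mul, abs_of_nonneg hΓnn]
  _ ≤ (Real.Gamma (α * k + β))⁻¹ * (∑ i', ∑ j', |A i' j'|) ^ k :=
      mul_le_mul_of_nonneg_left (entry_pow_bound A k i j) hΓnn
  _ = (∑ i', ∑ j', |A i' j'|) ^ k * (Real.Gamma (α * k + β))⁻¹ := mul_comm _ _

lemma dot_tsum_mulVec {p : ℕ} (f : ℕ → Matrix (Fin p) (Fin p) ℝ) (π v : Fin p → ℝ)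
    (hf : Summable f) :
    π ⬝ᵥ ((∑' k, f k) *ᵥ v) = ∑' k, π ⬝ᵥ (f k *ᵥ v) := by
  let L : Matrix (Fin p) (Fin p) ℝ →ₗ[ℝ] ℝ :=
    { toFun := fun A => π ⬝ᵥ (A *ᵥ v)
      map_add' := fun A B => by simp [Matrix.add_mulVec, dotProduct_add]
      map_smul' := fun r A => by simp [Matrix.smul_mulVec, dotProduct_smul] }
  exact ContinuousLinearMap.map_tsum ⟨L, L.continuous_of_finiteDimensional⟩ hf

lemma rpow_pow {y : ℝ} (hy : 0 ≤ y) (α : ℝ) (k : ℕ) : (y ^ α) ^ k = y ^ (α * k) := by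
  rw [← Real.rpow_natCast (y ^ α) k, ← Real.rpow_mul hy]

/-- For a phase-type generator `(π, T)` with `t = -Te` and `α ∈ (0,1]`,
the function `F(x) = 1 - π E_{α,1}(T x^α) e` satisfies `F(0) = 0` and
`F'(x) = x^(α-1) π E_{α,α}(T x^α) t` for `x > 0`, i.e. `F` is the CDF of MML(α,π,T). -/
theorem mml_cdf {p : ℕ} (hp : 0 < p) (α : ℝ) (hα : α ∈ Set.Ioc (0 : ℝ) 1)
    (T : Matrix (Fin p) (Fin p) ℝ)
    (hoff : ∀ i j, i ≠ j → 0 ≤ T i j) (hdiag : ∀ i, T i i < 0)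
    (hrow : ∀ i, ∑ j, T i j ≤ 0) (hinv : IsUnit T.det)
    (π : Fin p → ℝ) (hπ : ∀ i, 0 ≤ π i) (hπ1 : ∑ i, π i = 1) :
    let t : Fin p → ℝ := -(T *ᵥ fun _ => 1)
    let F : ℝ → ℝ := fun x => 1 - π ⬝ᵥ (matrixML α 1 (x ^ α • T) *ᵥ fun _ => 1)
    F 0 = 0 ∧ ∀ x : ℝ, 0 < x →
      HasDerivAt F (x ^ (α - 1) * (π ⬝ᵥ (matrixML α α (x ^ α • T) *ᵥ t))) x := by
  obtain ⟨hα0, hα1⟩ := hα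
  intro t F
  have ht : t = -(T *ᵥ fun _ => 1) := rfl
  have hFdef : F = fun x => 1 - π ⬝ᵥ (matrixML α 1 (x ^ α • T) *ᵥ fun _ => 1) := rfl
  -- key interchange lemma
  have hkey : ∀ (β : ℝ), 0 ≤ β → ∀ (y : ℝ), 0 ≤ y → ∀ v : Fin p → ℝ,
      π ⬝ᵥ (matrixML α β (y ^ α • T) *ᵥ v)
        = ∑' k : ℕ, (Real.Gamma (α * k + β))⁻¹ * y ^ (α * k) * (π ⬝ᵥ (T ^ k *ᵥ v)) := by
    intro β hβ y hy v
    rw [matrixML, dot_tsum_mulVec _ _ _ (summable_ML_series hα0 hα1 hβ _)]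
    refine tsum_congr fun k => ?_
    rw [smul_pow, smul_smul, Matrix.smul_mulVec, dotProduct_smul, smul_eq_mul,
      rpow_pow hy α k]
  constructor
  · show (1 : ℝ) - π ⬝ᵥ (matrixML α 1 ((0:ℝ) ^ α • T) *ᵥ fun _ => 1) = 0
    rw [Real.zero_rpow hα0.ne', zero_smul]
    have h1 : matrixML α 1 (0 : Matrix (Fin p) (Fin p) ℝ) = 1 := by
      rw [matrixML, tsum_eq_single 0 (fun k hk => by rw [zero_pow hk, smul_zero])]
      simp [Real.Gamma_one]
    rw [h1, Matrix.one_mulVec]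
    simp [dotProduct, hπ1]
  · intro x hx
    -- bound on the coefficients
    set M : ℝ := ∑ i, ∑ j, |T i j| with hMdef
    have hM0 : 0 ≤ M :=
      Finset.sum_nonneg fun _ _ => Finset.sum_nonneg fun _ _ => abs_nonneg _
    have hcb : ∀ k : ℕ, |π ⬝ᵥ (T ^ k *ᵥ fun _ => (1:ℝ))| ≤ p * M ^ k := by
      intro k
      have hv : ∀ i, |(T ^ k *ᵥ fun _ => (1:ℝ)) i| ≤ p * M ^ k := by
        intro i
        simp only [Matrix.mulVec, dotProduct, mul_one]
        calc |∑ j, (T ^ k) i j| ≤ ∑ j, |(T ^ k) i j| := Finset.abs_sum_le_sum_abs _ _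
        _ ≤ ∑ _j : Fin p, M ^ k := Finset.sum_le_sum fun j _ => entry_pow_bound T k i j
        _ = p * M ^ k := by simp [Finset.sum_const, Finset.card_univ, nsmul_eq_mul]
      calc |π ⬝ᵥ (T ^ k *ᵥ fun _ => (1:ℝ))| ≤ ∑ i, |π i * (T ^ k *ᵥ fun _ => (1:ℝ)) i| :=
            Finset.abs_sum_le_sum_abs _ _
      _ = ∑ i, π i * |(T ^ k *ᵥ fun _ => (1:ℝ)) i| := by
            simp [abs_mul, fun i => abs_of_nonneg (hπ i)]
      _ ≤ ∑ i, π i * (p * M ^ k) :=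
            Finset.sum_le_sum fun i _ => mul_le_mul_of_nonneg_left (hv i) (hπ i)
      _ = p * M ^ k := by rw [← Finset.sum_mul, hπ1, one_mul]
    have hx2 : 0 < x / 2 := by linarith
    have hxmem : x ∈ Set.Ioo (x/2) (x+1) := ⟨by linarith, by linarith⟩
    -- the uniform bound
    have hbound : ∀ (k : ℕ), ∀ y ∈ Set.Ioo (x/2) (x+1),
        ‖(Real.Gamma (α * k))⁻¹ * y ^ (α * (k:ℕ) - 1) * (π ⬝ᵥ (T ^ k *ᵥ fun _ => (1:ℝ)))‖
          ≤ (Real.Gamma (α * k))⁻¹ * (((x+1) ^ α * M) ^ k * (2 / x * p)) := by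
      intro k y hy
      have hy0 : 0 < y := lt_trans hx2 hy.1
      have hΓnn : 0 ≤ (Real.Gamma (α * k))⁻¹ := gamma_inv_nonneg (by positivity)
      have h1 : y ^ (α * (k:ℕ) - 1) ≤ ((x+1) ^ α) ^ k * (2 / x) := by
        rw [Real.rpow_sub hy0, Real.rpow_one, div_eq_mul_inv]
        have h2 : y ^ (α * (k:ℝ)) ≤ (x+1) ^ (α * (k:ℝ)) :=
          Real.rpow_le_rpow hy0.le hy.2.le (by positivity)
        have h3 : (x+1) ^ (α * (k:ℝ)) = ((x+1) ^ α) ^ k := (rpow_pow (by linarith) α k).symm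
        have h4 : y⁻¹ ≤ 2 / x := by
          rw [div_eq_mul_inv]
          have := (inv_le_inv₀ hy0 hx2).mpr hy.1.le
          calc y⁻¹ ≤ (x/2)⁻¹ := this
          _ = 2 * x⁻¹ := by rw [div_eq_mul_inv, mul_inv, inv_inv, mul_comm]
        exact mul_le_mul (h2.trans_eq h3) h4 (inv_nonneg.mpr hy0.le) (by positivity)
      rw [Real.norm_eq_abs, abs_mul, abs_mul, abs_of_nonneg hΓnn,
        abs_of_nonneg (Real.rpow_nonneg hy0.le _)]
      calc (Real.Gamma (α * k))⁻¹ * y ^ (α * (k:ℕ) - 1) * |π ⬝ᵥ (T ^ k *ᵥ fun _ => (1:ℝ))|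
          ≤ (Real.Gamma (α * k))⁻¹ * (((x+1) ^ α) ^ k * (2 / x)) * (p * M ^ k) := by
            refine mul_le_mul (mul_le_mul_of_nonneg_left h1 hΓnn) (hcb k) (abs_nonneg _) ?_
            have h5 : (0:ℝ) ≤ ((x+1) ^ α) ^ k * (2 / x) := by positivity
            exact mul_nonneg hΓnn h5
      _ = (Real.Gamma (α * k))⁻¹ * (((x+1) ^ α * M) ^ k * (2 / x * p)) := by
            rw [mul_pow]; ring
    -- summability of the bound
    have hsummu : Summable (fun k : ℕ =>
        (Real.Gamma (α * k))⁻¹ * (((x+1) ^ α * M) ^ k * (2 / x * p))) := by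
      have hr : 0 ≤ (x+1) ^ α * M := mul_nonneg (Real.rpow_nonneg (by linarith) _) hM0
      have := (summable_gamma_inv hα0 hα1 0 _ le_rfl hr).mul_right (2 / x * p)
      refine this.congr fun k => ?_
      rw [add_zero]; ring
    -- derivative of each term
    have hderiv : ∀ (k : ℕ), ∀ y ∈ Set.Ioo (x/2) (x+1),
        HasDerivAt (fun z : ℝ =>
            (Real.Gamma (α * k + 1))⁻¹ * z ^ (α * (k:ℕ)) * (π ⬝ᵥ (T ^ k *ᵥ fun _ => (1:ℝ))))
          ((Real.Gamma (α * k))⁻¹ * y ^ (α * (k:ℕ) - 1) * (π ⬝ᵥ (T ^ k *ᵥ fun _ => (1:ℝ)))) y := by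
      intro k y hy
      have hy0 : 0 < y := lt_trans hx2 hy.1
      have h := ((Real.hasDerivAt_rpow_const (x := y) (p := α * k)
        (Or.inl hy0.ne')).const_mul ((Real.Gamma (α * k + 1))⁻¹)).mul_const
        (π ⬝ᵥ (T ^ k *ᵥ fun _ => (1:ℝ)))
      refine h.congr_deriv ?_
      rcases Nat.eq_zero_or_pos k with hk | hk
      · subst hk; simp [Real.Gamma_zero]
      · have hαk : (0:ℝ) < α * k := by positivity
        have hΓ : Real.Gamma (α * k) ≠ 0 := (Real.Gamma_pos_of_pos hαk).ne'
        rw [Real.Gamma_add_one hαk.ne']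
        field_simp
    -- summability at the point x
    have hsumgx : Summable (fun k : ℕ =>
        (Real.Gamma (α * k + 1))⁻¹ * x ^ (α * (k:ℕ)) * (π ⬝ᵥ (T ^ k *ᵥ fun _ => (1:ℝ)))) := by
      apply Summable.of_abs
      have hs2 : Summable (fun k : ℕ =>
          (x ^ α * M) ^ k * (Real.Gamma (α * k + 1))⁻¹ * p) :=
        (summable_gamma_inv hα0 hα1 1 (x ^ α * M) zero_le_one
          (mul_nonneg (Real.rpow_nonneg hx.le _) hM0)).mul_right (p:ℝ)
      refine Summable.of_nonneg_of_le (fun k => abs_nonneg _) (fun k => ?_) hs2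
      have hΓnn : 0 ≤ (Real.Gamma (α * k + 1))⁻¹ := gamma_inv_nonneg (by positivity)
      rw [abs_mul, abs_mul, abs_of_nonneg hΓnn, abs_of_nonneg (Real.rpow_nonneg hx.le _)]
      calc (Real.Gamma (α * k + 1))⁻¹ * x ^ (α * (k:ℕ)) * |π ⬝ᵥ (T ^ k *ᵥ fun _ => (1:ℝ))|
          ≤ (Real.Gamma (α * k + 1))⁻¹ * (x ^ α) ^ k * (p * M ^ k) := by
            refine mul_le_mul (by rw [rpow_pow hx.le]) (hcb k) (abs_nonneg _) ?_
            have : 0 ≤ (x ^ α) ^ k := by positivity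
            exact mul_nonneg hΓnn this
      _ = (x ^ α * M) ^ k * (Real.Gamma (α * k + 1))⁻¹ * p := by rw [mul_pow]; ring
    -- main derivative of the series
    have main := hasDerivAt_tsum_of_isPreconnected hsummu isOpen_Ioo
      ((convex_Ioo (x/2) (x+1)).isPreconnected) hderiv hbound hxmem hsumgx hxmem
    -- summability of derivative series at x
    have hsumg'x : Summable (fun k : ℕ =>
        (Real.Gamma (α * k))⁻¹ * x ^ (α * (k:ℕ) - 1) * (π ⬝ᵥ (T ^ k *ᵥ fun _ => (1:ℝ)))) := by
      apply Summable.of_norm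
      exact Summable.of_nonneg_of_le (fun k => norm_nonneg _)
        (fun k => hbound k x hxmem) hsummu
    -- identify F near x with the series
    have hFeq : F =ᶠ[nhds x] fun z => 1 - ∑' k : ℕ,
        (Real.Gamma (α * k + 1))⁻¹ * z ^ (α * (k:ℕ)) * (π ⬝ᵥ (T ^ k *ᵥ fun _ => (1:ℝ))) := by
      filter_upwards [isOpen_Ioo.mem_nhds hxmem] with y hy
      have hy0 : 0 < y := lt_trans hx2 hy.1
      show F y = _
      rw [hFdef]
      simp only []
      rw [hkey 1 zero_le_one y hy0.le (fun _ => 1)]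
    have hD : HasDerivAt F (-(∑' k : ℕ,
        (Real.Gamma (α * k))⁻¹ * x ^ (α * (k:ℕ) - 1) * (π ⬝ᵥ (T ^ k *ᵥ fun _ => (1:ℝ))))) x :=
      (main.const_sub 1).congr_of_eventuallyEq hFeq
    -- identify the derivative value
    have hval : x ^ (α - 1) * (π ⬝ᵥ (matrixML α α (x ^ α • T) *ᵥ t))
        = -(∑' k : ℕ,
          (Real.Gamma (α * k))⁻¹ * x ^ (α * (k:ℕ) - 1) * (π ⬝ᵥ (T ^ k *ᵥ fun _ => (1:ℝ)))) := by
      rw [hkey α hα0.le x hx.le t]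
      have htc : ∀ k : ℕ,
          (π ⬝ᵥ (T ^ k *ᵥ t)) = -(π ⬝ᵥ (T ^ (k+1) *ᵥ fun _ => (1:ℝ))) := by
        intro k
        rw [ht, Matrix.mulVec_neg, Matrix.mulVec_mulVec, ← pow_succ, dotProduct_neg]
      rw [Summable.tsum_eq_zero_add hsumg'x]
      have hz : (Real.Gamma (α * (0:ℕ)))⁻¹ * x ^ (α * ((0:ℕ):ℝ) - 1) *
          (π ⬝ᵥ (T ^ (0:ℕ) *ᵥ fun _ => (1:ℝ))) = 0 := by
        simp [Real.Gamma_zero]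
      rw [hz, zero_add, ← tsum_mul_left, ← tsum_neg]
      refine tsum_congr fun k => ?_
      rw [htc k]
      have harg : α * ((k:ℕ)+1 : ℕ) = α * k + α := by push_cast; ring
      rw [harg]
      have hxs : x ^ (α - 1) * x ^ (α * (k:ℝ)) = x ^ (α * k + α - 1) := by
        rw [← Real.rpow_add hx]; ring_nf
      calc x ^ (α - 1) * ((Real.Gamma (α * k + α))⁻¹ * x ^ (α * (k:ℝ)) *
            (-(π ⬝ᵥ (T ^ (k+1) *ᵥ fun _ => (1:ℝ)))))
          = -((Real.Gamma (α * k + α))⁻¹ * (x ^ (α - 1) * x ^ (α * (k:ℝ))) *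
            (π ⬝ᵥ (T ^ (k+1) *ᵥ fun _ => (1:ℝ)))) := by ring
      _ = -((Real.Gamma (α * k + α))⁻¹ * x ^ (α * k + α - 1) *
            (π ⬝ᵥ (T ^ (k+1) *ᵥ fun _ => (1:ℝ)))) := by rw [hxs]
    rw [hval]
    exact hD
end

section
/- Let 0 < α ≤ 1, λ > 0 and p ∈ ℕ. The MML(α, π, T) distribution with Erlang phase-type component (π = (1,0,…,0), T the p×p bidiagonal matrix with −λ on the diagonal and λ on the superdiagonal) has density f(x) = λ^p x^{αp − 1} E_{α,α}^{(p−1)}(−λ x^α) / (p−1)! for x > 0, where E_{α,α}^{(k)} denotes the k-th derivative of the scalar Mittag-Leffler function E_{α,α}. -/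
open MeasureTheory Matrix

/-- The scalar two-parameter Mittag-Leffler function `E_{α,β}(z) = Σ_{k≥0} z^k / Γ(αk+β)`. -/
noncomputable def scalarML (α β z : ℝ) : ℝ :=
  ∑' k : ℕ, z ^ k / Real.Gamma (α * k + β)

open Filter in
lemma gamma_ratio_s9 {x a : ℝ} (ha : 0 < a) (hx : 1 < x) :
    Real.Gamma x * (x - 1) ^ a ≤ Real.Gamma (x + a) := by
  have h0 : (0:ℝ) < x - 1 := by linarith
  have hxpos : (0:ℝ) < x := by linarith
  have hxa : (0:ℝ) < x + a := by linarith
  have hs := Real.convexOn_log_Gamma.slope_mono_adjacent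
    (Set.mem_Ioi.2 h0) (Set.mem_Ioi.2 hxa) (by linarith : x - 1 < x) (by linarith : x < x + a)
  have hG : Real.Gamma x = (x - 1) * Real.Gamma (x - 1) := by
    have := Real.Gamma_add_one (show (x-1:ℝ) ≠ 0 by positivity)
    simpa using this
  have hGpos : 0 < Real.Gamma x := Real.Gamma_pos_of_pos hxpos
  have hG1pos : 0 < Real.Gamma (x - 1) := Real.Gamma_pos_of_pos h0
  have hGapos : 0 < Real.Gamma (x + a) := Real.Gamma_pos_of_pos hxa
  simp only [Function.comp] at hs
  rw [hG] at hs
  rw [Real.log_mul (by positivity) (by positivity)] at hs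
  have hs2 : Real.log (x - 1) ≤ (Real.log (Real.Gamma (x + a)) - Real.log (Real.Gamma x)) / a := by
    have : x - (x - 1) = 1 := by ring
    rw [this] at hs
    have : x + a - x = a := by ring
    rw [this] at hs
    calc Real.log (x-1) = (Real.log (x - 1) + Real.log (Real.Gamma (x-1))
        - Real.log (Real.Gamma (x - 1))) / 1 := by ring
      _ ≤ _ := by rw [hG, Real.log_mul (by positivity) (by positivity)]; exact hs
  have : a * Real.log (x - 1) + Real.log (Real.Gamma x) ≤ Real.log (Real.Gamma (x + a)) := by
    rw [le_div_iff₀ ha] at hs2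
    linarith
  calc Real.Gamma x * (x - 1) ^ a
      = Real.exp (Real.log (Real.Gamma x) + a * Real.log (x-1)) := by
        rw [Real.exp_add, Real.exp_log hGpos, Real.rpow_def_of_pos h0]; ring_nf
    _ ≤ Real.Gamma (x + a) := by
        rw [← Real.exp_log hGapos]
        exact Real.exp_le_exp.2 (by linarith)

lemma desc_succ_le (k n : ℕ) :
    (k+1+n).descFactorial n ≤ (n+1) * ((k+n).descFactorial n) := by
  cases n with
  | zero => simp
  | succ n =>
    calc (k+1+(n+1)).descFactorial (n+1) = (k+n+2) * ((k+n+1).descFactorial n) := by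
          rw [show k+1+(n+1) = (k+n+1)+1 by omega, Nat.succ_descFactorial_succ]
      _ ≤ ((n+1)+1) * ((k+1) * ((k+n+1).descFactorial n)) := by
          rw [← Nat.mul_assoc]
          exact Nat.mul_le_mul_right _ (by nlinarith)
      _ = ((n+1)+1) * ((k+(n+1)).descFactorial (n+1)) := by
          rw [Nat.descFactorial_succ, show k+(n+1)-n = k+1 by omega,
            show k+(n+1) = k+n+1 from rfl]

open Filter in
lemma aux_summable {α β : ℝ} (hα : 0 < α) (hβ : 0 < β) (n : ℕ) (C : ℝ) :
    Summable (fun k : ℕ => ((k+n).descFactorial n : ℝ) * C ^ k / Real.Gamma (α*k+β)) := by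
  apply summable_of_ratio_norm_eventually_le (r := 1/2) (by norm_num)
  have h1 : Tendsto (fun k : ℕ => α*(k:ℝ)+β-1) atTop atTop := by
    have : Tendsto (fun k : ℕ => α*(k:ℝ)) atTop atTop :=
      (tendsto_natCast_atTop_atTop (R := ℝ)).const_mul_atTop hα
    have := tendsto_atTop_add_const_right atTop (β-1 : ℝ) this
    convert this using 2 with k
    ring
  have h2 : Tendsto (fun k : ℕ => (α*(k:ℝ)+β-1) ^ α) atTop atTop :=
    (tendsto_rpow_atTop hα).comp h1
  have h3 := h2.eventually_ge_atTop (2*((n:ℝ)+1)*(|C|+1))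
  have h4 := h1.eventually_gt_atTop 0
  filter_upwards [h3, h4] with k hk1 hk2
  set D : ℝ := ((k+n).descFactorial n : ℝ) with hD
  set D' : ℝ := ((k+1+n).descFactorial n : ℝ) with hD'
  set S : ℝ := (α*(k:ℝ)+β-1) ^ α with hS
  have hxk : 1 < α*(k:ℝ)+β := by linarith
  have hGpos : 0 < Real.Gamma (α*k+β) := Real.Gamma_pos_of_pos (by linarith)
  have hG'pos : 0 < Real.Gamma (α*(k+1:ℕ)+β) := Real.Gamma_pos_of_pos (by push_cast; nlinarith)
  have hSpos : 0 < S := lt_of_lt_of_le (by positivity) hk1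
  have hGge : Real.Gamma (α*k+β) * S ≤ Real.Gamma (α*(k+1:ℕ)+β) := by
    have := gamma_ratio_s9 hα hxk
    calc Real.Gamma (α*k+β) * S ≤ Real.Gamma ((α*k+β) + α) := this
      _ = Real.Gamma (α*(k+1:ℕ)+β) := by push_cast; ring_nf
  have hDle : D' ≤ ((n:ℝ)+1) * D := by
    have h := desc_succ_le k n
    rw [hD, hD']
    push_cast
    exact_mod_cast h
  have hDpos : 0 < D := by
    have : (k+n).descFactorial n ≠ 0 := by
      rw [Ne, Nat.descFactorial_eq_zero_iff_lt]; omega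
    rw [hD]; exact_mod_cast Nat.pos_of_ne_zero this
  have hD'pos : 0 < D' := by
    have : (k+1+n).descFactorial n ≠ 0 := by
      rw [Ne, Nat.descFactorial_eq_zero_iff_lt]; omega
    rw [hD']; exact_mod_cast Nat.pos_of_ne_zero this
  rw [Real.norm_eq_abs, Real.norm_eq_abs, abs_div, abs_div, abs_mul, abs_mul, abs_pow, abs_pow,
    abs_of_pos hGpos, abs_of_pos hG'pos, abs_of_pos hDpos, abs_of_pos hD'pos]
  calc D' * |C|^(k+1) / Real.Gamma (α*(k+1:ℕ)+β)
      ≤ (((n:ℝ)+1)*(|C|+1)*(D*|C|^k)) / (Real.Gamma (α*(k:ℕ)+β)*S) := by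
        apply div_le_div₀ (by positivity) ?_ (by positivity) hGge
        rw [pow_succ]
        nlinarith [abs_nonneg C, pow_nonneg (abs_nonneg C) k, hDle, hDpos.le,
          mul_le_mul_of_nonneg_right hDle (pow_nonneg (abs_nonneg C) k)]
    _ = (((n:ℝ)+1)*(|C|+1)/S) * (D*|C|^k/Real.Gamma (α*(k:ℕ)+β)) := by
        rw [div_mul_div_comm, mul_comm (Real.Gamma (α*(k:ℕ)+β)) S]
    _ ≤ 1/2 * (D*|C|^k/Real.Gamma (α*(k:ℕ)+β)) := by
        apply mul_le_mul_of_nonneg_right ?_ (by positivity)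
        rw [div_le_iff₀ hSpos]
        linarith

lemma desc_mul_le (k n : ℕ) :
    ((k+n).descFactorial n) * k ≤ (k+(n+1)).descFactorial (n+1) := by
  have h1 : (k+(n+1)).descFactorial (n+1) = (k+1) * ((k+n+1).descFactorial n) := by
    rw [show k+(n+1) = (k+n+1) by omega, Nat.descFactorial_succ,
      show k+n+1-n = k+1 by omega]
  rw [h1]
  calc ((k+n).descFactorial n) * k ≤ ((k+n+1).descFactorial n) * (k+1) :=
        Nat.mul_le_mul (Nat.descFactorial_le n (by omega)) (by omega)
    _ = (k+1) * ((k+n+1).descFactorial n) := Nat.mul_comm _ _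

lemma desc_succ_eq (j n : ℕ) :
    (j+(n+1)).descFactorial (n+1) = (j+1) * ((j+1+n).descFactorial n) := by
  rw [show j+(n+1) = (j+n+1) by omega, Nat.descFactorial_succ,
    show j+n+1-n = j+1 by omega, show j+1+n = j+n+1 by omega]

lemma series_hasDerivAt {α β : ℝ} (hα : 0 < α) (hβ : 0 < β) (n : ℕ) (z : ℝ) :
    HasDerivAt (fun y : ℝ => ∑' k : ℕ, ((k+n).descFactorial n : ℝ) * y^k / Real.Gamma (α*k+β))
      (∑' k : ℕ, ((k+(n+1)).descFactorial (n+1) : ℝ) * z^k / Real.Gamma (α*(k+1)+β)) z := by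
  set R : ℝ := |z| + 1 with hR
  have hR1 : 1 ≤ R := by rw [hR]; linarith [abs_nonneg z]
  have hR0 : 0 < R := by positivity
  have hGpos : ∀ k : ℕ, 0 < Real.Gamma (α*k+β) := fun k =>
    Real.Gamma_pos_of_pos (by positivity)
  have key := hasDerivAt_tsum_of_isPreconnected
    (u := fun k : ℕ => ((k+(n+1)).descFactorial (n+1) : ℝ) * R^k / Real.Gamma (α*k+β))
    (g := fun (k : ℕ) (y : ℝ) => ((k+n).descFactorial n : ℝ) * y^k / Real.Gamma (α*k+β))
    (g' := fun (k : ℕ) (y : ℝ) => ((k+n).descFactorial n : ℝ) * ((k:ℝ) * y^(k-1)) / Real.Gamma (α*k+β))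
    (aux_summable hα hβ (n+1) R) (Metric.isOpen_ball (x := (0:ℝ)) (ε := R))
    ((convex_ball (0:ℝ) R).isPreconnected)
    (fun k y _ => by
      have h := ((hasDerivAt_pow k y).const_mul (((k+n).descFactorial n : ℝ))).div_const
        (Real.Gamma (α*k+β))
      convert h using 1)
    (fun k y hy => by
      have hyR : |y| ≤ R := by
        rw [Metric.mem_ball, dist_zero_right, Real.norm_eq_abs] at hy
        linarith
      rw [Real.norm_eq_abs, abs_div, abs_of_pos (hGpos k), abs_mul, abs_mul, abs_pow,
        Nat.abs_cast, abs_of_nonneg (Nat.cast_nonneg _)]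
      have hnum : ((k+n).descFactorial n : ℝ) * ((k:ℝ) * |y|^(k-1))
          ≤ ((k+(n+1)).descFactorial (n+1) : ℝ) * R^k := by
        calc ((k+n).descFactorial n : ℝ) * ((k:ℝ) * |y|^(k-1))
            = (((k+n).descFactorial n : ℝ) * (k:ℝ)) * |y|^(k-1) := by ring
          _ ≤ ((k+(n+1)).descFactorial (n+1) : ℝ) * R^(k-1) := by
              apply mul_le_mul ?_ (pow_le_pow_left₀ (abs_nonneg y) hyR _)
                (by positivity) (Nat.cast_nonneg _)
              exact_mod_cast desc_mul_le k n
          _ ≤ ((k+(n+1)).descFactorial (n+1) : ℝ) * R^k := by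
              apply mul_le_mul_of_nonneg_left ?_ (Nat.cast_nonneg _)
              exact pow_le_pow_right₀ hR1 (by omega)
      exact (div_le_div_iff_of_pos_right (hGpos k)).2 hnum)
    (Metric.mem_ball_self hR0) (aux_summable hα hβ n 0)
    (Metric.mem_ball.2 (by rw [dist_zero_right, Real.norm_eq_abs]; linarith))
  refine HasDerivAt.congr_deriv key (Eq.symm ?_)
  -- reindex ∑' k, D_k * (k * z^(k-1)) / G_k
  have h0 : ∀ k : ℕ, k ∉ Set.range (fun j : ℕ => j + 1) →
      ((k+n).descFactorial n : ℝ) * ((k:ℝ) * z^(k-1)) / Real.Gamma (α*k+β) = 0 := by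
    intro k hk
    have hk0 : k = 0 := by
      rcases Nat.eq_zero_or_pos k with h | h
      · exact h
      · have h1 : k - 1 + 1 = k := by omega
        exact absurd ⟨k-1, h1⟩ hk
    simp [hk0]
  conv_rhs => rw [← Function.Injective.tsum_eq (add_left_injective 1)
    (Function.support_subset_iff'.2 h0)]
  apply tsum_congr
  intro j
  have hd : (((j+1)+n).descFactorial n : ℝ) * ((j:ℝ)+1) = ((j+(n+1)).descFactorial (n+1) : ℝ) := by
    rw [desc_succ_eq]
    push_cast
    ring
  simp only [Nat.add_sub_cancel, Nat.cast_add, Nat.cast_one]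
  rw [← hd]
  ring

lemma aux_iter {α : ℝ} (hα : 0 < α) (n : ℕ) :
    iteratedDeriv n (scalarML α α) = fun z : ℝ =>
      ∑' k : ℕ, ((k+n).descFactorial n : ℝ) * z^k / Real.Gamma (α*k+(α*n+α)) := by
  induction n with
  | zero =>
    rw [iteratedDeriv_zero]
    funext z
    unfold scalarML
    apply tsum_congr
    intro k
    norm_num
  | succ n ih =>
    rw [iteratedDeriv_succ, ih]
    funext z
    rw [(series_hasDerivAt hα (β := α*n+α) (by positivity) n z).deriv]
    apply tsum_congr
    intro k
    have : α*((k:ℝ)+1)+(α*(n:ℝ)+α) = α*k+(α*((n+1:ℕ):ℝ)+α) := by push_cast; ring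
    rw [this]

/-- The MML(α,π,T) density with Erlang(p, λ) phase-type component equals
`λ^p x^(αp-1) E_{α,α}^{(p-1)}(-λ x^α) / (p-1)!`. -/
theorem mml_erlang_density {p : ℕ} (hp : 0 < p) (α lam : ℝ)
    (hα : α ∈ Set.Ioc (0 : ℝ) 1) (hlam : 0 < lam) :
    let T : Matrix (Fin p) (Fin p) ℝ := Matrix.of fun i j =>
      if j = i then -lam else if (j : ℕ) = (i : ℕ) + 1 then lam else 0
    let π : Fin p → ℝ := fun i => if (i : ℕ) = 0 then 1 else 0
    let t : Fin p → ℝ := -(T *ᵥ fun _ => 1)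
    ∀ x : ℝ, 0 < x →
      x ^ (α - 1) * (π ⬝ᵥ (matrixML α α (x ^ α • T) *ᵥ t))
        = lam ^ p * x ^ (α * p - 1) *
            iteratedDeriv (p - 1) (scalarML α α) (-lam * x ^ α) / (p - 1).factorial := by
  intro T π t x hx
  obtain ⟨hα0, hα1⟩ := hα
  set q := p - 1 with hq
  have hpq : p = q + 1 := by omega
  have hql : q < p := by omega
  set z0 : Fin p := ⟨0, hp⟩ with hz0
  set zl : Fin p := ⟨q, hql⟩ with hzl
  have hxα : 0 < x ^ α := Real.rpow_pos_of_pos hx α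
  set c : ℝ := lam * x ^ α with hc
  have hc0 : 0 < c := by positivity
  set N : Matrix (Fin p) (Fin p) ℝ :=
    Matrix.of fun i j => if (j:ℕ) = (i:ℕ)+1 then (1:ℝ) else 0 with hN
  -- T = lam • (N - 1)
  have hT : T = lam • (N - 1) := by
    ext i j
    simp only [T, N, Matrix.of_apply, Matrix.smul_apply, Matrix.sub_apply, Matrix.one_apply,
      smul_eq_mul]
    by_cases h1 : j = i
    · subst h1
      rw [if_pos rfl, if_neg (show ¬(j:ℕ) = (j:ℕ)+1 by omega), if_pos rfl]
      ring
    · rw [if_neg h1, if_neg (show ¬ i = j from fun h => h1 h.symm)]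
      by_cases h2 : (j:ℕ) = (i:ℕ)+1
      · rw [if_pos h2, if_pos h2]; ring
      · rw [if_neg h2, if_neg h2]; ring
  have hA : x ^ α • T = c • (N - 1) := by
    rw [hT, smul_smul, hc, mul_comm]
  -- powers of N
  have hNpow : ∀ (m : ℕ) (i j : Fin p), (N ^ m) i j
      = if (j:ℕ) = (i:ℕ) + m then (1:ℝ) else 0 := by
    intro m
    induction m with
    | zero =>
      intro i j
      rw [pow_zero, Matrix.one_apply]
      by_cases h : i = j
      · subst h; rw [if_pos rfl, if_pos (by omega)]
      · rw [if_neg h, if_neg (fun hh => h (Fin.ext (by omega)))]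
    | succ m ihm =>
      intro i j
      rw [pow_succ, Matrix.mul_apply]
      by_cases hj : (j:ℕ) = (i:ℕ) + m + 1
      · have him : (i:ℕ) + m < p := by have := j.isLt; omega
        rw [Finset.sum_eq_single (⟨(i:ℕ)+m, him⟩ : Fin p)]
        · rw [ihm, if_pos rfl, one_mul, hN, Matrix.of_apply, if_pos (by simpa using hj),
            if_pos (by omega)]
        · intro l _ hl
          rw [ihm, if_neg (fun hh => hl (Fin.ext (by simpa using hh))), zero_mul]
        · intro h; exact absurd (Finset.mem_univ _) h
      · rw [if_neg (by omega)]
        apply Finset.sum_eq_zero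
        intro l _
        rw [ihm]
        by_cases hl : (l:ℕ) = (i:ℕ) + m
        · rw [if_pos hl, one_mul, hN, Matrix.of_apply, if_neg (by omega)]
        · rw [if_neg hl, zero_mul]
  -- binomial expansion of (N-1)^k entries
  have hsub : ∀ (k : ℕ) (i j : Fin p), ((N - 1) ^ k) i j
      = ∑ m ∈ Finset.range (k+1),
          ((-1:ℝ)^(k-m) * (k.choose m : ℝ)) * (if (j:ℕ) = (i:ℕ) + m then 1 else 0) := by
    intro k i j
    have hcomm : Commute N (-1 : Matrix (Fin p) (Fin p) ℝ) := (Commute.one_right N).neg_right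
    rw [sub_eq_add_neg, hcomm.add_pow, Matrix.sum_apply]
    apply Finset.sum_congr rfl
    intro m _
    have h1 : ((-1 : Matrix (Fin p) (Fin p) ℝ)) ^ (k-m) = ((-1:ℝ)^(k-m)) • 1 := by
      rw [← neg_one_smul ℝ (1 : Matrix (Fin p) (Fin p) ℝ), smul_pow, one_pow]
    have h2 : ((k.choose m : ℕ) : Matrix (Fin p) (Fin p) ℝ) = ((k.choose m : ℝ)) • 1 := by
      rw [← map_natCast (algebraMap ℝ (Matrix (Fin p) (Fin p) ℝ)) (k.choose m),
        Algebra.algebraMap_eq_smul_one]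
    rw [h1, h2, Matrix.mul_smul, Matrix.mul_smul, Matrix.mul_one, Matrix.mul_one, smul_smul,
      Matrix.smul_apply, hNpow, smul_eq_mul]
    ring
  -- bound for all entries
  have hbound : ∀ (k : ℕ) (i j : Fin p), |((N - 1) ^ k) i j| ≤ 2^k := by
    intro k i j
    rw [hsub]
    calc |∑ m ∈ Finset.range (k+1),
          ((-1:ℝ)^(k-m) * (k.choose m : ℝ)) * (if (j:ℕ) = (i:ℕ) + m then 1 else 0)|
        ≤ ∑ m ∈ Finset.range (k+1),
          |((-1:ℝ)^(k-m) * (k.choose m : ℝ)) * (if (j:ℕ) = (i:ℕ) + m then 1 else 0)| :=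
          Finset.abs_sum_le_sum_abs _ _
      _ ≤ ∑ m ∈ Finset.range (k+1), (k.choose m : ℝ) := by
          apply Finset.sum_le_sum
          intro m _
          rw [abs_mul, abs_mul, abs_pow, abs_neg, abs_one, one_pow, one_mul,
            Nat.abs_cast]
          by_cases h : (j:ℕ) = (i:ℕ) + m
          · rw [if_pos h, abs_one, mul_one]
          · rw [if_neg h, abs_zero, mul_zero]; positivity
      _ = 2^k := by
          rw [← Nat.cast_sum]
          rw [Nat.sum_range_choose]
          push_cast
          ring
  -- exact entry
  have hentry : ∀ k : ℕ, ((N - 1) ^ k) z0 zl = (-1:ℝ)^(k-q) * (k.choose q : ℝ) := by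
    intro k
    rw [hsub]
    rw [Finset.sum_eq_single q]
    · rw [if_pos (by simp [hz0, hzl]), mul_one]
    · intro m _ hm
      rw [if_neg (by simp [hz0, hzl]; omega), mul_zero]
    · intro hq'
      rw [Finset.mem_range, not_lt] at hq'
      rw [Nat.choose_eq_zero_of_lt (by omega)]
      simp
  -- Gamma positivity
  have hGpos : ∀ k : ℕ, 0 < Real.Gamma (α*k+α) := fun k =>
    Real.Gamma_pos_of_pos (by positivity)
  -- summability of entries
  have hsummable : ∀ i j : Fin p,
      Summable (fun k : ℕ => (Real.Gamma (α*k+α))⁻¹ * ((x ^ α • T) ^ k) i j) := by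
    intro i j
    have hs0 : Summable (fun k : ℕ => (2*c)^k / Real.Gamma (α*k+α)) := by
      have := aux_summable hα0 hα0 0 (2*c)
      simpa using this
    apply Summable.of_norm_bounded hs0
    intro k
    rw [hA, smul_pow, Matrix.smul_apply, smul_eq_mul, Real.norm_eq_abs, abs_mul, abs_mul,
      abs_inv, abs_of_pos (hGpos k), abs_pow, abs_of_pos hc0]
    rw [mul_pow 2 c k, div_eq_mul_inv, mul_comm ((2:ℝ)^k * c^k) _]
    apply mul_le_mul_of_nonneg_left ?_ (by positivity)
    calc c^k * |((N - 1) ^ k) i j| ≤ c^k * 2^k :=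
          mul_le_mul_of_nonneg_left (hbound k i j) (by positivity)
      _ = 2^k * c^k := by ring
  -- entries of the matrix ML function
  have hMentry : ∀ i j : Fin p, matrixML α α (x ^ α • T) i j
      = ∑' k : ℕ, (Real.Gamma (α*k+α))⁻¹ * ((x ^ α • T) ^ k) i j := by
    intro i j
    have hh : HasSum (fun k : ℕ => (Real.Gamma (α*k+α))⁻¹ • (x ^ α • T) ^ k)
        (Matrix.of fun i j => ∑' k : ℕ, (Real.Gamma (α*k+α))⁻¹ * ((x ^ α • T) ^ k) i j) := by
      refine Pi.hasSum.2 fun i => Pi.hasSum.2 fun j => ?_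
      simp only [Matrix.smul_apply, smul_eq_mul, Matrix.of_apply]
      exact (hsummable i j).hasSum
    unfold matrixML
    rw [hh.tsum_eq, Matrix.of_apply]
  -- value of t
  have ht : ∀ j : Fin p, t j = if (j:ℕ) = q then lam else 0 := by
    intro j
    show -(T *ᵥ fun _ => (1:ℝ)) j = _
    have hmv : (T *ᵥ fun _ => (1:ℝ)) j = ∑ l, T j l := by
      simp [Matrix.mulVec, dotProduct]
    rw [hmv]
    have hterm : ∀ l : Fin p, T j l
        = (-lam) * (if l = j then (1:ℝ) else 0) + lam * (if (l:ℕ) = (j:ℕ)+1 then (1:ℝ) else 0) := by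
      intro l
      simp only [T, Matrix.of_apply]
      by_cases h1 : l = j
      · subst h1
        rw [if_pos rfl, if_pos rfl, if_neg (by omega)]
        ring
      · rw [if_neg h1, if_neg h1]
        by_cases h2 : (l:ℕ) = (j:ℕ)+1
        · rw [if_pos h2, if_pos h2]; ring
        · rw [if_neg h2, if_neg h2]; ring
    rw [Finset.sum_congr rfl (fun l _ => hterm l), Finset.sum_add_distrib,
      ← Finset.mul_sum, ← Finset.mul_sum]
    have e1 : ∑ l : Fin p, (if l = j then (1:ℝ) else 0) = 1 := by
      rw [Finset.sum_ite_eq' Finset.univ j (fun _ => (1:ℝ)), if_pos (Finset.mem_univ j)]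
    have e2 : ∑ l : Fin p, (if (l:ℕ) = (j:ℕ)+1 then (1:ℝ) else 0)
        = if (j:ℕ) = q then 0 else 1 := by
      by_cases hjq : (j:ℕ) = q
      · rw [if_pos hjq]
        apply Finset.sum_eq_zero
        intro l _
        rw [if_neg (by have := l.isLt; omega)]
      · rw [if_neg hjq]
        have hlt : (j:ℕ)+1 < p := by have := j.isLt; omega
        rw [Finset.sum_eq_single (⟨(j:ℕ)+1, hlt⟩ : Fin p)]
        · rw [if_pos rfl]
        · intro l _ hl
          rw [if_neg (fun hh => hl (Fin.ext (by simpa using hh)))]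
        · intro h; exact absurd (Finset.mem_univ _) h
    rw [e1, e2]
    by_cases hjq : (j:ℕ) = q
    · rw [if_pos hjq, if_pos hjq]; ring
    · rw [if_neg hjq, if_neg hjq]; ring
  -- dot product
  set M := matrixML α α (x ^ α • T) with hM
  have hdot : π ⬝ᵥ (M *ᵥ t) = M z0 zl * lam := by
    have hv : (M *ᵥ t) z0 = M z0 zl * lam := by
      have : ∀ j : Fin p, M z0 j * t j = if j = zl then M z0 zl * lam else 0 := by
        intro j
        rw [ht j]
        by_cases hj : (j:ℕ) = q
        · have : j = zl := by rw [Fin.ext_iff]; simpa [hzl] using hj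
          subst this
          rw [if_pos hj, if_pos rfl]
        · rw [if_neg hj, mul_zero, if_neg (by rw [Fin.ext_iff]; simpa [hzl] using hj)]
      have hsum : (M *ᵥ t) z0 = ∑ j, M z0 j * t j := by
        simp [Matrix.mulVec, dotProduct]
      rw [hsum, Finset.sum_congr rfl (fun j _ => this j),
        Finset.sum_ite_eq' Finset.univ zl (fun _ => M z0 zl * lam),
        if_pos (Finset.mem_univ zl)]
    have hπ : ∀ i : Fin p, π i * (M *ᵥ t) i = if i = z0 then (M *ᵥ t) i else 0 := by
      intro i
      simp only [π]
      by_cases h : (i:ℕ) = 0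
      · rw [if_pos h, one_mul, if_pos (by rw [Fin.ext_iff]; simpa [hz0] using h)]
      · rw [if_neg h, zero_mul, if_neg (by rw [Fin.ext_iff]; simpa [hz0] using h)]
    calc π ⬝ᵥ (M *ᵥ t) = ∑ i, π i * (M *ᵥ t) i := rfl
      _ = ∑ i, if i = z0 then (M *ᵥ t) i else 0 := Finset.sum_congr rfl (fun i _ => hπ i)
      _ = (M *ᵥ t) z0 := by
          rw [Finset.sum_ite_eq' Finset.univ z0 (fun i => (M *ᵥ t) i),
            if_pos (Finset.mem_univ z0)]
      _ = M z0 zl * lam := hv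
  -- final computation
  rw [hdot, hMentry z0 zl, aux_iter hα0 q]
  have hAk : ∀ k : ℕ, ((x ^ α • T) ^ k) z0 zl = c^k * ((-1:ℝ)^(k-q) * (k.choose q : ℝ)) := by
    intro k
    rw [hA, smul_pow, Matrix.smul_apply, smul_eq_mul, hentry]
  have hL : (∑' k : ℕ, (Real.Gamma (α*k+α))⁻¹ * ((x ^ α • T) ^ k) z0 zl)
      = ∑' k : ℕ, (Real.Gamma (α*k+α))⁻¹ * (c^k * ((-1:ℝ)^(k-q) * (k.choose q : ℝ))) :=
    tsum_congr fun k => by rw [hAk]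
  rw [hL, ← tsum_mul_right, ← tsum_mul_left, ← tsum_mul_left, ← tsum_div_const]
  have hsupp : Function.support (fun k : ℕ =>
      x ^ (α-1) * ((Real.Gamma (α*k+α))⁻¹ * (c^k * ((-1:ℝ)^(k-q) * (k.choose q : ℝ))) * lam))
      ⊆ Set.range (fun j : ℕ => j + q) := by
    apply Function.support_subset_iff'.2
    intro k hk
    have hklt : k < q := by
      by_contra h
      exact hk ⟨k - q, show k - q + q = k by omega⟩
    rw [Nat.choose_eq_zero_of_lt hklt]
    simp
  conv_lhs => rw [← Function.Injective.tsum_eq (add_left_injective q) hsupp]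
  apply tsum_congr
  intro j
  have hfact : (q.factorial : ℝ) ≠ 0 := by positivity
  have hGne : Real.Gamma (α*j+(α*q+α)) ≠ 0 := by
    have : 0 < Real.Gamma (α*j+(α*q+α)) := Real.Gamma_pos_of_pos (by positivity)
    positivity
  have e1 : α*((j+q:ℕ):ℝ)+α = α*j+(α*q+α) := by push_cast; ring
  have e2 : (((j+q).descFactorial q : ℕ) : ℝ) = (q.factorial:ℝ) * ((j+q).choose q : ℝ) := by
    exact_mod_cast congrArg (Nat.cast (R := ℝ)) (Nat.descFactorial_eq_factorial_mul_choose (j+q) q)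
  have e3 : -lam * x ^ α = -c := by rw [hc]; ring
  have e4 : x ^ (α*p-1) = x ^ (α-1) * x ^ (α*(q:ℝ)) := by
    rw [← Real.rpow_add hx]
    congr 1
    have : ((p:ℕ):ℝ) = (q:ℝ) + 1 := by rw [hpq]; push_cast; ring
    rw [this]
    ring
  have e5 : (x ^ α) ^ q = x ^ (α*(q:ℝ)) := by
    rw [Real.rpow_mul hx.le, Real.rpow_natCast]
  have e6 : lam ^ p = lam * lam ^ q := by rw [hpq, pow_succ]; ring
  rw [Nat.add_sub_cancel, e1, e2, e3, e4, e6]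
  rw [neg_pow c j, pow_add c j q, mul_pow lam (x^α) q, e5]
  field_simp
end

section
/- For 0 < α ≤ 1, β > 0, a ∈ ℝ and s > 0 with s^α > |a|, the Laplace transform identity ∫_0^∞ e^{-sx} x^{β−1} E_{α,β}(a x^α) dx = s^{-β} (1 − a s^{-α})^{-1} holds. -/
open MeasureTheory

/-- For `0 < α ≤ 1`, `β > 0`, `a ∈ ℝ`, `s > 0` with `s^α > |a|`,
`∫_0^∞ e^{-sx} x^{β-1} E_{α,β}(a x^α) dx = s^{-β} (1 - a s^{-α})⁻¹`. -/
theorem ml_laplace_transform (α β a s : ℝ) (hα : α ∈ Set.Ioc (0 : ℝ) 1)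
    (hβ : 0 < β) (hs : 0 < s) (ha : |a| < s ^ α) :
    ∫ x in Set.Ioi (0 : ℝ), Real.exp (-s * x) * (x ^ (β - 1) * scalarML α β (a * x ^ α))
      = s ^ (-β) * (1 - a * s ^ (-α))⁻¹ := by
  obtain ⟨hα0, hα1⟩ := hα
  have hsα : (0:ℝ) < s ^ α := Real.rpow_pos_of_pos hs α
  have hratio : |a| * s ^ (-α) < 1 := by
    rw [Real.rpow_neg hs.le]
    calc |a| * (s ^ α)⁻¹ < s ^ α * (s ^ α)⁻¹ := by
          exact mul_lt_mul_of_pos_right ha (inv_pos.mpr hsα)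
      _ = 1 := mul_inv_cancel₀ hsα.ne'
  have hsa : |a * s ^ (-α)| < 1 := by
    rwa [abs_mul, abs_of_pos (Real.rpow_pos_of_pos hs _)]
  set g : ℕ → ℝ → ℝ := fun k x =>
    (a ^ k / Real.Gamma (α * k + β)) * (x ^ (α * k + β - 1) * Real.exp (-(s * x))) with hg
  have hexp : ∀ k : ℕ, (0:ℝ) < α * k + β := fun k => by positivity
  have hGpos : ∀ k : ℕ, 0 < Real.Gamma (α * k + β) :=
    fun k => Real.Gamma_pos_of_pos (hexp k)
  -- integrability of each basic term
  have hintk : ∀ k : ℕ, IntegrableOn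
      (fun x : ℝ => x ^ (α * k + β - 1) * Real.exp (-(s * x))) (Set.Ioi 0) := by
    intro k
    have h := integrableOn_rpow_mul_exp_neg_mul_rpow
      (by linarith [hexp k] : (-1:ℝ) < α * k + β - 1) one_pos hs
    simpa [Real.rpow_one, neg_mul] using h
  have hgint : ∀ k : ℕ, IntegrableOn (g k) (Set.Ioi 0) :=
    fun k => ((hintk k).const_mul _)
  -- value of each basic integral
  have hval : ∀ k : ℕ, ∫ x in Set.Ioi (0:ℝ), x ^ (α * k + β - 1) * Real.exp (-(s * x))
      = Real.Gamma (α * k + β) * s ^ (-(α * k + β)) := by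
    intro k
    rw [Real.integral_rpow_mul_exp_neg_mul_Ioi (hexp k) hs, one_div,
      Real.inv_rpow hs.le, ← Real.rpow_neg hs.le, mul_comm]
  -- pointwise identity on Ioi 0
  have hpt : ∀ x ∈ Set.Ioi (0:ℝ),
      Real.exp (-s * x) * (x ^ (β - 1) * scalarML α β (a * x ^ α)) = ∑' k, g k x := by
    intro x hx
    have hx0 : (0:ℝ) < x := hx
    rw [scalarML, ← tsum_mul_left, ← tsum_mul_left]
    refine tsum_congr fun k => ?_
    have h1 : (a * x ^ α) ^ k = a ^ k * x ^ (α * k) := by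
      rw [mul_pow, ← Real.rpow_natCast (x ^ α) k, ← Real.rpow_mul hx0.le]
    have h2 : x ^ (α * k + β - 1) = x ^ (α * (k:ℝ)) * x ^ (β - 1) := by
      rw [← Real.rpow_add hx0]; ring_nf
    simp only [hg, h1, h2, neg_mul]
    ring
  rw [setIntegral_congr_fun measurableSet_Ioi hpt]
  -- interchange integral and sum
  have hmeas : ∀ k : ℕ, AEStronglyMeasurable (g k)
      ((volume : Measure ℝ).restrict (Set.Ioi 0)) :=
    fun k => (hgint k).aestronglyMeasurable
  have hsummable : Summable (fun k : ℕ => s ^ (-β) * (|a| * s ^ (-α)) ^ k) :=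
    (summable_geometric_of_lt_one (by positivity) hratio).mul_left _
  have hc : ∀ k : ℕ, |a| ^ k * s ^ (-(α * k + β)) = s ^ (-β) * (|a| * s ^ (-α)) ^ k := by
    intro k
    rw [neg_add, Real.rpow_add hs, mul_pow, ← Real.rpow_natCast (s ^ (-α)) k,
      ← Real.rpow_mul hs.le]
    ring_nf
  have hnormint : ∀ k : ℕ, ∫ x in Set.Ioi (0:ℝ), ‖g k x‖
      = s ^ (-β) * (|a| * s ^ (-α)) ^ k := by
    intro k
    have heq : ∀ x ∈ Set.Ioi (0:ℝ), ‖g k x‖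
        = (|a| ^ k / Real.Gamma (α * k + β)) * (x ^ (α * k + β - 1) * Real.exp (-(s * x))) := by
      intro x hx
      have hx0 : (0:ℝ) < x := hx
      have hnn : 0 ≤ x ^ (α * k + β - 1) * Real.exp (-(s * x)) := by positivity
      rw [Real.norm_eq_abs, hg]
      rw [abs_mul, abs_of_nonneg hnn, abs_div, abs_pow,
        abs_of_pos (hGpos k)]
    rw [setIntegral_congr_fun measurableSet_Ioi heq, integral_const_mul, hval k,
      ← hc k]
    field_simp
  have hfin : ∑' k : ℕ, ∫⁻ x in Set.Ioi (0:ℝ), ‖g k x‖ₑ ≠ ⊤ := by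
    have : ∀ k : ℕ, ∫⁻ x in Set.Ioi (0:ℝ), ‖g k x‖ₑ
        = ENNReal.ofReal (s ^ (-β) * (|a| * s ^ (-α)) ^ k) := by
      intro k
      rw [← ofReal_integral_norm_eq_lintegral_enorm (hgint k), hnormint k]
    rw [tsum_congr this, ← ENNReal.ofReal_tsum_of_nonneg (fun k => by positivity) hsummable]
    exact ENNReal.ofReal_ne_top
  rw [integral_tsum hmeas hfin]
  -- compute the sum
  have hterm : ∀ k : ℕ, ∫ x in Set.Ioi (0:ℝ), g k x = s ^ (-β) * (a * s ^ (-α)) ^ k := by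
    intro k
    rw [hg]
    simp only
    rw [integral_const_mul, hval k, neg_add, Real.rpow_add hs, mul_pow,
      ← Real.rpow_natCast (s ^ (-α)) k, ← Real.rpow_mul hs.le]
    field_simp
  rw [tsum_congr hterm, tsum_mul_left, tsum_geometric_of_abs_lt_one hsa]
end

section
/- Let X ~ MML(α, π, T) with Coxian phase-type component: π = (π_1,…,π_p), T upper-bidiagonal with diagonal entries −λ_j and superdiagonal entries λ_j, where λ_1,…,λ_p are distinct and positive. Then the density of X is f(x) = x^{α−1} Σ_{j=1}^p π_j (∏_{k=j}^p λ_k) Σ_{m=j}^p E_{α,α}(−λ_m x^α) / ∏_{n=j, n≠m}^p (λ_n − λ_m) for x > 0. -/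
open Matrix Finset

section Helpers

open Filter Polynomial

lemma gamma_lb_s19 {α y : ℝ} (hα0 : 0 < α) (hy : 2 ≤ y) :
    (y - 1) ^ α * Real.Gamma y ≤ Real.Gamma (y + α) := by
  have h1 : (0:ℝ) < y - 1 := by linarith
  have hy0 : (0:ℝ) < y := by linarith
  have hΓy : 0 < Real.Gamma y := Real.Gamma_pos_of_pos hy0
  have hΓyα : 0 < Real.Gamma (y + α) := Real.Gamma_pos_of_pos (by linarith)
  have hΓy1 : 0 < Real.Gamma (y - 1) := Real.Gamma_pos_of_pos h1
  have hs := Real.convexOn_log_Gamma.slope_mono_adjacent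
    (x := y - 1) (y := y) (z := y + α)
    (Set.mem_Ioi.mpr h1) (Set.mem_Ioi.mpr (by linarith)) (by linarith) (by linarith)
  have hrec : Real.Gamma y = (y - 1) * Real.Gamma (y - 1) := by
    have h := Real.Gamma_add_one (s := y - 1) (by positivity)
    rw [sub_add_cancel] at h
    exact h
  have hlog : Real.log (y-1) ≤ (Real.log (Real.Gamma (y + α)) - Real.log (Real.Gamma y)) / α := by
    have : ((Real.log ∘ Real.Gamma) y - (Real.log ∘ Real.Gamma) (y-1)) / (y - (y-1))
        = Real.log (y - 1) := by
      simp only [Function.comp_apply, sub_sub_cancel, div_one]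
      rw [hrec, Real.log_mul (by positivity) (by positivity)]
      ring
    rw [this] at hs
    convert hs using 2
    · rfl
    · rfl
    · ring
  have hlog2 : α * Real.log (y - 1) + Real.log (Real.Gamma y) ≤ Real.log (Real.Gamma (y + α)) := by
    have := (le_div_iff₀ hα0).mp hlog
    nlinarith [this]
  calc (y - 1) ^ α * Real.Gamma y
      = Real.exp (α * Real.log (y-1) + Real.log (Real.Gamma y)) := by
        rw [Real.exp_add, Real.rpow_def_of_pos h1, Real.exp_log hΓy, mul_comm α]
    _ ≤ Real.exp (Real.log (Real.Gamma (y + α))) := Real.exp_le_exp.mpr hlog2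
    _ = Real.Gamma (y + α) := Real.exp_log hΓyα

lemma ml_summable {α : ℝ} (hα0 : 0 < α) {C : ℝ} (hC : 0 ≤ C) :
    Summable (fun k : ℕ => C ^ k / Real.Gamma (α * k + α)) := by
  apply summable_of_ratio_norm_eventually_le (r := 1/2) (by norm_num)
  have ht : Tendsto (fun k : ℕ => α * k + α - 1) atTop atTop := by
    have h := tendsto_atTop_add_const_right atTop (α - 1)
      ((tendsto_natCast_atTop_atTop (R := ℝ)).const_mul_atTop hα0)
    apply h.congr
    intro k; ring
  have ht2 := ((tendsto_rpow_atTop hα0).comp ht).eventually_ge_atTop (2*C+1)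
  filter_upwards [ht2, ht.eventually_ge_atTop 1] with k hk1 hk2
  set y : ℝ := α * k + α with hy
  have hy2 : 2 ≤ y := by simp only [hy]; linarith
  have hy1 : (1:ℝ) ≤ y - 1 := by linarith
  have hpow : (2*C+1) ≤ (y-1) ^ α := hk1
  have hΓy : 0 < Real.Gamma y := Real.Gamma_pos_of_pos (by linarith)
  have hΓ2 : 0 < Real.Gamma (y + α) := Real.Gamma_pos_of_pos (by linarith)
  have hkey : (2*C+1) * Real.Gamma y ≤ Real.Gamma (y + α) := by
    calc (2*C+1) * Real.Gamma y ≤ (y-1)^α * Real.Gamma y := by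
          apply mul_le_mul_of_nonneg_right hpow hΓy.le
      _ ≤ Real.Gamma (y + α) := gamma_lb_s19 hα0 hy2
  have harg : α * (↑(k+1):ℝ) + α = y + α := by push_cast [hy]; ring
  rw [harg]
  rw [Real.norm_eq_abs, Real.norm_eq_abs, abs_div, abs_div, abs_of_pos hΓ2, abs_of_pos hΓy,
    abs_pow, abs_pow, abs_of_nonneg hC, pow_succ]
  rw [div_le_iff₀ hΓ2, one_div, inv_mul_eq_div, div_div, div_mul_eq_mul_div,
    le_div_iff₀ (by positivity)]
  nlinarith [pow_nonneg hC k, mul_le_mul_of_nonneg_left hkey (pow_nonneg hC k), hΓy.le]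

lemma lagrange_zero {ι : Type*} [DecidableEq ι] {s : Finset ι} {v : ι → ℝ}
    (hvs : Set.InjOn v s) (h2 : 2 ≤ s.card) :
    ∑ m ∈ s, ∏ n ∈ s.erase m, (v m - v n)⁻¹ = 0 := by
  have hne : s.Nonempty := card_pos.mp (by omega)
  have hcoeff : ∀ m ∈ s, (Lagrange.basis s v m).coeff (s.card - 1)
      = ∏ n ∈ s.erase m, (v m - v n)⁻¹ := by
    intro m hm
    have hd := Lagrange.natDegree_basis hvs hm
    rw [← hd, ← Polynomial.leadingCoeff, Lagrange.basis, Polynomial.leadingCoeff_prod]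
    refine prod_congr rfl fun n hn => ?_
    have hne' : v m ≠ v n := by
      obtain ⟨hnm, hns⟩ := mem_erase.mp hn
      exact fun h => hnm (hvs hns hm h.symm)
    rw [Lagrange.basisDivisor, leadingCoeff_mul, leadingCoeff_C, leadingCoeff_X_sub_C, mul_one]
  have h := congrArg (fun P => Polynomial.coeff P (s.card - 1)) (Lagrange.sum_basis hvs hne)
  simp only [finset_sum_coeff] at h
  rw [sum_congr rfl hcoeff] at h
  rwa [Polynomial.coeff_one, if_neg (by omega)] at h

lemma key {p : ℕ} (hp : 0 < p) (lam : Fin p → ℝ)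
    (hdist : Function.Injective lam) (k : ℕ) (j : Fin p) :
    lam ⟨p-1, by omega⟩ *
      ((Matrix.of fun i j => if j = i then -lam i else
        if (j:ℕ) = (i:ℕ)+1 then lam i else 0 : Matrix (Fin p) (Fin p) ℝ) ^ k) j ⟨p-1, by omega⟩
    = (∏ i ∈ univ.filter (fun i => j ≤ i), lam i) *
      ∑ m ∈ univ.filter (fun m => j ≤ m), (-lam m)^k /
        ∏ n ∈ (univ.filter (fun n => j ≤ n)).erase m, (lam n - lam m) := by
  set T : Matrix (Fin p) (Fin p) ℝ := Matrix.of fun i j => if j = i then -lam i else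
        if (j:ℕ) = (i:ℕ)+1 then lam i else 0 with hT
  set L : Fin p := ⟨p-1, by omega⟩ with hL
  have hTapp : ∀ r c : Fin p, T r c = if c = r then -lam r else
      if (c:ℕ) = (r:ℕ)+1 then lam r else 0 := fun r c => rfl
  have hfL : univ.filter (fun m => L ≤ m) = {L} := by
    ext m
    simp only [mem_filter, mem_univ, true_and, mem_singleton, Fin.le_def, Fin.ext_iff]
    have := m.isLt
    constructor
    · intro h; simp only [hL, Fin.val_mk] at h ⊢; omega
    · intro h; simp only [hL, Fin.val_mk] at h ⊢; omega
  induction k generalizing j with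
  | zero =>
    simp only [pow_zero]
    by_cases hj : j = L
    · subst hj
      rw [Matrix.one_apply_eq, hfL]
      simp
    · rw [Matrix.one_apply_ne (by exact hj)]
      set s := univ.filter (fun m => j ≤ m) with hs
      have hjs : j ∈ s := by simp [hs]
      have hLs : L ∈ s := by
        simp only [hs, mem_filter, mem_univ, true_and, Fin.le_def]
        have := j.isLt; simp only [hL, Fin.val_mk] at *; omega
      have hcard : 2 ≤ s.card := one_lt_card.mpr ⟨j, hjs, L, hLs, hj⟩
      have hterm : ∀ m ∈ s, (1:ℝ) / ∏ n ∈ s.erase m, (lam n - lam m)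
          = (-1:ℝ)^(s.card - 1) * ∏ n ∈ s.erase m, (lam m - lam n)⁻¹ := by
        intro m hm
        rw [one_div, ← prod_inv_distrib]
        have : ∀ n ∈ s.erase m, (lam n - lam m)⁻¹ = (-1) * (lam m - lam n)⁻¹ := by
          intro n hn
          rw [show lam n - lam m = -(lam m - lam n) by ring, inv_neg]
          ring
        rw [prod_congr rfl this, prod_mul_distrib, prod_const, card_erase_of_mem hm]
      rw [sum_congr rfl hterm, ← mul_sum,
        lagrange_zero (Set.injOn_of_injective hdist) hcard]
      simp
  | succ k ih =>
    rw [pow_succ', Matrix.mul_apply, Finset.mul_sum]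
    by_cases hj : j = L
    · subst hj
      have hrow : ∀ m : Fin p, lam L * (T L m * (T ^ k) m L)
          = (if m = L then -lam L * (lam L * (T ^ k) L L) else 0) := by
        intro m
        rw [hTapp]
        by_cases h1 : m = L
        · subst h1; simp
        · have h2 : ¬((m:ℕ) = (L:ℕ)+1) := by
            have := m.isLt; simp only [hL]; omega
          simp [h1, h2]
      rw [sum_congr rfl (fun m _ => hrow m), sum_ite_eq' univ L]
      simp only [mem_univ, if_true]
      rw [ih L, hfL]
      simp only [prod_singleton, sum_singleton, erase_singleton, prod_empty, div_one]
      ring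
    · have hj1 : (j:ℕ) + 1 < p := by
        have := j.isLt
        have : (j:ℕ) ≠ p - 1 := fun h => hj (by simp [hL, Fin.ext_iff, h])
        omega
      set j' : Fin p := ⟨(j:ℕ)+1, hj1⟩ with hj'
      have hrow : ∀ m : Fin p, lam L * (T j m * (T ^ k) m L)
          = (if m = j then -lam j * (lam L * (T ^ k) j L) else 0)
            + (if m = j' then lam j * (lam L * (T ^ k) j' L) else 0) := by
        intro m
        rw [hTapp]
        by_cases h1 : m = j
        · subst h1
          have : m ≠ j' := by simp [hj', Fin.ext_iff]
          simp [this]; ring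
        · by_cases h2 : m = j'
          · subst h2
            have hne : j' ≠ j := by simp [hj', Fin.ext_iff]
            simp [hne, hj', Fin.ext_iff]
            try ring
          · have h3 : ¬((m:ℕ) = (j:ℕ)+1) := fun h => h2 (by simp [hj', Fin.ext_iff, h])
            simp [h1, h3, h2]
      rw [sum_congr rfl (fun m _ => hrow m), sum_add_distrib, sum_ite_eq' univ j,
        sum_ite_eq' univ j']
      simp only [mem_univ, if_true]
      rw [ih j, ih j']
      -- now pure algebra
      set s' := univ.filter (fun m => j' ≤ m) with hs'
      have hjs' : j ∉ s' := by
        simp [hs', Fin.le_def, hj']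
      have hins : univ.filter (fun m => j ≤ m) = insert j s' := by
        ext m
        simp only [mem_filter, mem_univ, true_and, mem_insert, Fin.le_def, hs', hj',
          Fin.ext_iff]
        omega
      rw [hins]
      simp only [prod_insert hjs', sum_insert hjs', erase_insert hjs']
      have herase : ∀ m ∈ s', (insert j s').erase m = insert j (s'.erase m) := by
        intro m hm
        exact Finset.erase_insert_of_ne (fun h => hjs' (h ▸ hm))
      have hDm : ∀ m ∈ s', ∏ n ∈ (insert j s').erase m, (lam n - lam m)
          = (lam j - lam m) * ∏ n ∈ s'.erase m, (lam n - lam m) := by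
        intro m hm
        rw [herase m hm, prod_insert (fun h => hjs' (mem_of_mem_erase h))]
      have hDne : ∀ m ∈ s', ∏ n ∈ s'.erase m, (lam n - lam m) ≠ 0 := by
        intro m hm
        rw [prod_ne_zero_iff]
        intro n hn
        have : n ≠ m := (mem_erase.mp hn).1
        exact sub_ne_zero_of_ne (fun h => this (hdist h))
      set P' := ∏ i ∈ s', lam i with hP'
      have e1 : ∑ m ∈ s', (-lam m)^(k+1) / ∏ n ∈ (insert j s').erase m, (lam n - lam m)
          = ∑ m ∈ s', (-lam m)^(k+1) / ((lam j - lam m) * (∏ n ∈ s'.erase m, (lam n - lam m))) :=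
        sum_congr rfl fun m hm => by rw [hDm m hm]
      have e0 : ∑ m ∈ s', (-lam m)^k / ∏ n ∈ (insert j s').erase m, (lam n - lam m)
          = ∑ m ∈ s', (-lam m)^k / ((lam j - lam m) * (∏ n ∈ s'.erase m, (lam n - lam m))) :=
        sum_congr rfl fun m hm => by rw [hDm m hm]
      rw [e1, e0]
      have hA : lam j * P' * (∑ m ∈ s', (-lam m)^(k+1) / ((lam j - lam m) * (∏ n ∈ s'.erase m, (lam n - lam m))))
          = -lam j * (lam j * P' * (∑ m ∈ s', (-lam m)^k / ((lam j - lam m) * (∏ n ∈ s'.erase m, (lam n - lam m)))))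
            + lam j * (P' * (∑ m ∈ s', (-lam m)^k / (∏ n ∈ s'.erase m, (lam n - lam m)))) := by
        simp only [Finset.mul_sum]
        rw [← Finset.sum_add_distrib]
        refine sum_congr rfl fun m hm => ?_
        have h1 : lam j - lam m ≠ 0 :=
          sub_ne_zero_of_ne (fun h => hjs' (by rw [hdist h]; exact hm))
        have h2 : (∏ n ∈ s'.erase m, (lam n - lam m)) ≠ 0 := hDne m hm
        field_simp
        ring
      conv_rhs => rw [mul_add (lam j * P'), hA]
      ring

end Helpers

/-- The MML(α,π,T) density with Coxian phase-type component (distinct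
positive rates `λ_1,…,λ_p`) is
`f(x) = x^{α-1} Σ_j π_j (Π_{k≥j} λ_k) Σ_{m≥j} E_{α,α}(-λ_m x^α) / Π_{n≥j, n≠m}(λ_n - λ_m)`. -/
theorem mml_coxian_density {p : ℕ} (hp : 0 < p) (α : ℝ) (hα : α ∈ Set.Ioc (0 : ℝ) 1)
    (lam : Fin p → ℝ) (hlam : ∀ i, 0 < lam i) (hdist : Function.Injective lam)
    (π : Fin p → ℝ) (hπ : ∀ i, 0 ≤ π i) (hπ1 : ∑ i, π i = 1) :
    let T : Matrix (Fin p) (Fin p) ℝ := Matrix.of fun i j =>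
      if j = i then -lam i else if (j : ℕ) = (i : ℕ) + 1 then lam i else 0
    let t : Fin p → ℝ := -(T *ᵥ fun _ => 1)
    ∀ x : ℝ, 0 < x →
      x ^ (α - 1) * (π ⬝ᵥ (matrixML α α (x ^ α • T) *ᵥ t))
        = x ^ (α - 1) * ∑ j : Fin p, π j *
            (∏ k ∈ univ.filter (fun k => j ≤ k), lam k) *
            ∑ m ∈ univ.filter (fun m => j ≤ m),
              scalarML α α (-lam m * x ^ α) /
                ∏ n ∈ (univ.filter (fun n => j ≤ n)).erase m, (lam n - lam m) := by
  intro T t x hx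
  obtain ⟨hα0, hα1⟩ := hα
  set L : Fin p := ⟨p - 1, by omega⟩ with hL
  have hxα : 0 < x ^ α := Real.rpow_pos_of_pos hx α
  -- t is lam L at L, 0 elsewhere
  have ht : ∀ i, t i = if i = L then lam L else 0 := by
    intro i
    show -(T *ᵥ fun _ => (1:ℝ)) i = _
    simp only [Matrix.mulVec, dotProduct, mul_one]
    have hterm : ∀ m : Fin p, T i m
        = (if m = i then -lam i else 0)
          + (if (m:ℕ) = (i:ℕ)+1 then lam i else 0) := by
      intro m
      show (if m = i then -lam i else if (m:ℕ) = (i:ℕ)+1 then lam i else 0) = _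
      by_cases h1 : m = i
      · subst h1
        simp
      · simp [h1]
    rw [Finset.sum_congr rfl (fun m _ => hterm m), Finset.sum_add_distrib,
      Finset.sum_ite_eq' univ i]
    by_cases hi : i = L
    · subst hi
      have h2 : ∀ m : Fin p, ¬((m:ℕ) = (L:ℕ)+1) := by
        intro m; have := m.isLt; simp only [hL]; omega
      rw [Finset.sum_congr rfl (fun m _ => if_neg (h2 m))]
      simp
    · have hi1 : (i:ℕ) + 1 < p := by
        have := i.isLt
        have : (i:ℕ) ≠ p - 1 := fun h => hi (by simp [hL, Fin.ext_iff, h])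
        omega
      set i' : Fin p := ⟨(i:ℕ)+1, hi1⟩ with hi'
      have h2 : ∀ m : Fin p, ((m:ℕ) = (i:ℕ)+1) ↔ m = i' := by
        intro m; simp [hi', Fin.ext_iff]
      have h4 : ∀ m : Fin p, (if (m:ℕ) = (i:ℕ)+1 then lam i else 0)
          = (if m = i' then lam i else 0) := fun m => if_congr (h2 m) rfl rfl
      rw [Finset.sum_congr rfl fun m _ => h4 m, Finset.sum_ite_eq' univ i']
      simp [hi]
  -- mulVec against t picks out column L
  have hvec : ∀ (A : Matrix (Fin p) (Fin p) ℝ) (j : Fin p),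
      (A *ᵥ t) j = A j L * lam L := by
    intro A j
    simp only [Matrix.mulVec, dotProduct]
    have : ∀ m, A j m * t m = if m = L then A j L * lam L else 0 := by
      intro m
      rw [ht m]
      by_cases h : m = L
      · subst h; simp
      · simp [h]
    rw [Finset.sum_congr rfl (fun m _ => this m), Finset.sum_ite_eq' univ L]
    simp
  -- entry bound for powers
  set A : Matrix (Fin p) (Fin p) ℝ := x ^ α • T with hA
  set M : ℝ := ∑ i, ∑ c, |A i c| with hM
  have hM0 : 0 ≤ M := Finset.sum_nonneg fun i _ => Finset.sum_nonneg fun c _ => abs_nonneg _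
  have hbd : ∀ k (i c : Fin p), |(A ^ k) i c| ≤ M ^ k := by
    intro k
    induction k with
    | zero =>
      intro i c
      simp only [pow_zero, Matrix.one_apply]
      split <;> simp
    | succ k ih =>
      intro i c
      rw [pow_succ, Matrix.mul_apply]
      calc |∑ l, (A ^ k) i l * A l c| ≤ ∑ l, |(A ^ k) i l * A l c| := Finset.abs_sum_le_sum_abs _ _
        _ ≤ ∑ l, M ^ k * |A l c| := by
            refine Finset.sum_le_sum fun l _ => ?_
            rw [abs_mul]
            exact mul_le_mul_of_nonneg_right (ih i l) (abs_nonneg _)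
        _ = M ^ k * ∑ l, |A l c| := by rw [← Finset.mul_sum]
        _ ≤ M ^ k * M := by
            refine mul_le_mul_of_nonneg_left ?_ (pow_nonneg hM0 k)
            rw [hM]
            refine Finset.sum_le_sum fun l _ => ?_
            exact Finset.single_le_sum (f := fun c' => |A l c'|) (fun c' _ => abs_nonneg _) (mem_univ c)
        _ = M ^ (k+1) := by rw [pow_succ]
  have hΓpos : ∀ k : ℕ, 0 < Real.Gamma (α * k + α) := by
    intro k
    apply Real.Gamma_pos_of_pos
    positivity
  -- summability of the matrix series entrywise
  have hent : ∀ i c : Fin p, Summable fun k : ℕ =>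
      ((Real.Gamma (α * k + α))⁻¹ • A ^ k) i c := by
    intro i c
    apply Summable.of_norm_bounded (ml_summable hα0 hM0)
    intro k
    simp only [Matrix.smul_apply, smul_eq_mul, Real.norm_eq_abs, abs_mul,
      abs_inv, abs_of_pos (hΓpos k)]
    rw [div_eq_inv_mul]
    exact mul_le_mul_of_nonneg_left (hbd k i c) (by positivity)
  have hsum : Summable fun k : ℕ => (Real.Gamma (α * k + α))⁻¹ • A ^ k := by
    refine Pi.summable.mpr ?_
    intro i
    refine Pi.summable.mpr ?_
    intro c
    exact (hent i c).congr fun k => rfl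
  -- entrywise tsum
  have hentry : ∀ j : Fin p, (matrixML α α A) j L
      = ∑' k : ℕ, (Real.Gamma (α * k + α))⁻¹ * (A ^ k) j L := by
    intro j
    rw [matrixML]; erw [tsum_apply hsum, tsum_apply]
    · rfl
    · exact Pi.summable.mp hsum j
  -- per-j value of the vector
  have hzsum : ∀ z : ℝ, Summable fun k : ℕ => z ^ k / Real.Gamma (α * k + α) := by
    intro z
    apply Summable.of_norm_bounded (ml_summable hα0 (abs_nonneg z))
    intro k
    rw [Real.norm_eq_abs, abs_div, abs_pow, abs_of_pos (hΓpos k)]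
  congr 1
  simp only [dotProduct]
  refine Finset.sum_congr rfl fun j _ => ?_
  rw [hvec, hentry j]
  have hterm : ∀ k : ℕ, (Real.Gamma (α * ↑k + α))⁻¹ * (A ^ k) j L * lam L
      = ∑ m ∈ univ.filter (fun m => j ≤ m),
          (∏ i ∈ univ.filter (fun i => j ≤ i), lam i) *
            ((-lam m * x ^ α) ^ k / Real.Gamma (α * ↑k + α)) /
              ∏ n ∈ (univ.filter (fun n => j ≤ n)).erase m, (lam n - lam m) := by
    intro k
    have hsp : (A ^ k) j L = (x ^ α) ^ k * (T ^ k) j L := by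
      rw [hA, smul_pow, Matrix.smul_apply, smul_eq_mul]
    have hk : lam L * (T ^ k) j L
        = (∏ i ∈ univ.filter (fun i => j ≤ i), lam i) *
          ∑ m ∈ univ.filter (fun m => j ≤ m), (-lam m) ^ k /
            ∏ n ∈ (univ.filter (fun n => j ≤ n)).erase m, (lam n - lam m) :=
      key hp lam hdist k j
    calc (Real.Gamma (α * ↑k + α))⁻¹ * (A ^ k) j L * lam L
        = (Real.Gamma (α * ↑k + α))⁻¹ * (x ^ α) ^ k * (lam L * (T ^ k) j L) := by
          rw [hsp]; ring
      _ = (Real.Gamma (α * ↑k + α))⁻¹ * (x ^ α) ^ k *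
            ((∏ i ∈ univ.filter (fun i => j ≤ i), lam i) *
              ∑ m ∈ univ.filter (fun m => j ≤ m), (-lam m) ^ k /
                ∏ n ∈ (univ.filter (fun n => j ≤ n)).erase m, (lam n - lam m)) := by
          rw [hk]
      _ = _ := by
          rw [Finset.mul_sum, Finset.mul_sum]
          refine Finset.sum_congr rfl fun m _ => ?_
          rw [mul_pow]
          ring
  rw [← tsum_mul_right, tsum_congr hterm, Summable.tsum_finsetSum (by
    intro m _
    have h := ((hzsum (-lam m * x ^ α)).mul_left
      (∏ i ∈ univ.filter (fun i => j ≤ i), lam i)).div_const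
      (∏ n ∈ (univ.filter (fun n => j ≤ n)).erase m, (lam n - lam m))
    exact h.congr fun k => by rw [mul_div_assoc])]
  have hfin : ∀ m ∈ univ.filter (fun m => j ≤ m),
      (∑' k : ℕ, (∏ i ∈ univ.filter (fun i => j ≤ i), lam i) *
        ((-lam m * x ^ α) ^ k / Real.Gamma (α * ↑k + α)) /
          ∏ n ∈ (univ.filter (fun n => j ≤ n)).erase m, (lam n - lam m))
      = (∏ i ∈ univ.filter (fun i => j ≤ i), lam i) *
          (scalarML α α (-lam m * x ^ α) /
            ∏ n ∈ (univ.filter (fun n => j ≤ n)).erase m, (lam n - lam m)) := by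
    intro m _
    rw [scalarML]
    have hc : ∀ k : ℕ, (∏ i ∈ univ.filter (fun i => j ≤ i), lam i) *
        ((-lam m * x ^ α) ^ k / Real.Gamma (α * ↑k + α)) /
          ∏ n ∈ (univ.filter (fun n => j ≤ n)).erase m, (lam n - lam m)
        = ((∏ i ∈ univ.filter (fun i => j ≤ i), lam i) /
            ∏ n ∈ (univ.filter (fun n => j ≤ n)).erase m, (lam n - lam m)) *
          ((-lam m * x ^ α) ^ k / Real.Gamma (α * ↑k + α)) := fun k => by ring
    rw [tsum_congr hc, tsum_mul_left]
    ring
  rw [Finset.sum_congr rfl hfin, ← Finset.mul_sum]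
  ring
end
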